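/- arXiv:1707.04732 — 5 statements merged into one kernel-verified Lean document; each statement's English description precedes it below -/
import Mathlib

section
/- First quantifier elimination for n-th power predicates (existence): let ℓ ≥ 0, let u_0, …, u_{ℓ−1} be positive rational numbers and n_0, …, n_{ℓ−1} positive integers. Then there exists a positive rational x such that for every i < ℓ the number u_i·x is an n_i-th power of a rational number, if and only if for all i ≠ j the number u_i·u_j^{−1} is a d_{i,j}-th power of a rational number, where d_{i,j} = gcd(n_i, n_j). -/
lemma nat_pow_of_dvd_factorization {a n : ℕ} (ha : a ≠ 0)
    (h : ∀ p, n ∣ a.factorization p) : ∃ b : ℕ, a = b ^ n := by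
  refine ⟨a.factorization.prod fun p k => p ^ (k / n), ?_⟩
  conv_lhs => rw [← Nat.factorization_prod_pow_eq_self ha]
  rw [Finsupp.prod, Finsupp.prod, ← Finset.prod_pow]
  refine Finset.prod_congr rfl fun p hp => ?_
  rw [← pow_mul, Nat.div_mul_cancel (h p)]

lemma padicValRat_zpow {p : ℕ} [Fact p.Prime] {q : ℚ} (hq : q ≠ 0) (z : ℤ) :
    padicValRat p (q ^ z) = z * padicValRat p q := by
  rcases z with k | k
  · rw [show (Int.ofNat k : ℤ) = (k : ℤ) from rfl, zpow_natCast, padicValRat.pow q]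
  · rw [zpow_negSucc, padicValRat.inv, padicValRat.pow q, Int.negSucc_eq]
    push_cast; ring

lemma rat_pow_iff {q : ℚ} (hq : 0 < q) {n : ℕ} (hn : 0 < n) :
    (∃ y : ℚ, q = y ^ n) ↔ ∀ p : ℕ, p.Prime → (n : ℤ) ∣ padicValRat p q := by
  constructor
  · rintro ⟨y, rfl⟩ p hp
    haveI := Fact.mk hp
    have hy : y ≠ 0 := by
      rintro rfl; simp [zero_pow hn.ne'] at hq
    rw [padicValRat.pow y]
    exact Dvd.intro _ rfl
  · intro h
    have hnum : q.num ≠ 0 := Rat.num_ne_zero.mpr hq.ne'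
    set A := q.num.natAbs with hA
    set B := q.den with hB
    have hA0 : A ≠ 0 := Int.natAbs_ne_zero.mpr hnum
    have hB0 : B ≠ 0 := q.den_nz
    have hval : ∀ p : ℕ, p.Prime →
        padicValRat p q = (padicValNat p A : ℤ) - (padicValNat p B : ℤ) := by
      intro p hp
      haveI := Fact.mk hp
      rfl
    have hcop : A.Coprime B := q.reduced
    have hAfac : ∀ p, n ∣ A.factorization p := by
      intro p
      by_cases hp : p.Prime
      · rw [Nat.factorization_def _ hp]
        by_cases hpd : p ∣ A
        · have hpB : ¬ p ∣ B := fun hc => hp.one_lt.ne'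
            (Nat.eq_one_of_dvd_coprimes hcop hpd hc)
          have := h p hp
          rw [hval p hp, padicValNat.eq_zero_of_not_dvd hpB] at this
          simpa using (Int.natCast_dvd_natCast.mp (by simpa using this))
        · simp [padicValNat.eq_zero_of_not_dvd hpd]
      · simp [Nat.factorization_eq_zero_of_not_prime _ hp]
    have hBfac : ∀ p, n ∣ B.factorization p := by
      intro p
      by_cases hp : p.Prime
      · rw [Nat.factorization_def _ hp]
        by_cases hpd : p ∣ B
        · have hpA : ¬ p ∣ A := fun hc => hp.one_lt.ne'
            (Nat.eq_one_of_dvd_coprimes hcop hc hpd)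
          have := h p hp
          rw [hval p hp, padicValNat.eq_zero_of_not_dvd hpA] at this
          have h2 : (n : ℤ) ∣ (padicValNat p B : ℤ) := by
            have := this.neg_right
            rw [neg_sub] at this
            simpa using this
          exact_mod_cast h2
        · simp [padicValNat.eq_zero_of_not_dvd hpd]
      · simp [Nat.factorization_eq_zero_of_not_prime _ hp]
    obtain ⟨c, hc⟩ := nat_pow_of_dvd_factorization hA0 hAfac
    obtain ⟨d, hd⟩ := nat_pow_of_dvd_factorization hB0 hBfac
    refine ⟨(c : ℚ) / d, ?_⟩
    rw [div_pow]
    have hnum' : (q.num : ℚ) = (A : ℚ) := by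
      rw [hA]
      have h4 : |q.num| = q.num := abs_of_nonneg (le_of_lt (Rat.num_pos.mpr hq))
      rw [Nat.cast_natAbs, h4]
    rw [← Rat.num_div_den q, hnum']
    rw [hc, show q.den = d ^ n from hd]
    push_cast
    ring

lemma gcd_lcm_dvd {a b m w : ℕ} (ha : a ≠ 0) (hb : b ≠ 0) (hm : m ≠ 0)
    (h1 : Nat.gcd a m ∣ w) (h2 : Nat.gcd b m ∣ w) : Nat.gcd (Nat.lcm a b) m ∣ w := by
  rcases Nat.eq_zero_or_pos w with rfl | hw
  · exact dvd_zero _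
  have hlcm : Nat.lcm a b ≠ 0 := Nat.lcm_ne_zero ha hb
  have hg : Nat.gcd (Nat.lcm a b) m ≠ 0 := Nat.gcd_ne_zero_right hm
  rw [← Nat.factorization_le_iff_dvd hg hw.ne']
  intro p
  have e1 := (Nat.factorization_le_iff_dvd (Nat.gcd_ne_zero_right hm : Nat.gcd a m ≠ 0) hw.ne').mpr h1 p
  have e2 := (Nat.factorization_le_iff_dvd (Nat.gcd_ne_zero_right hm : Nat.gcd b m ≠ 0) hw.ne').mpr h2 p
  rw [Nat.factorization_gcd ha hm] at e1
  rw [Nat.factorization_gcd hb hm] at e2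
  rw [Nat.factorization_gcd hlcm hm, Nat.factorization_lcm ha hb]
  rw [Finsupp.inf_apply] at e1 e2 ⊢
  rw [Finsupp.sup_apply]
  omega

lemma finset_gcd_lcm_dvd {ι : Type*} (s : Finset ι) (f : ι → ℕ) {m w : ℕ}
    (hf : ∀ i ∈ s, f i ≠ 0) (hm : m ≠ 0)
    (h : ∀ i ∈ s, Nat.gcd (f i) m ∣ w) : Nat.gcd (s.lcm f) m ∣ w := by
  classical
  induction s using Finset.induction_on with
  | empty => simpa using (Nat.one_dvd w)
  | insert x s hx ih =>
    rw [Finset.lcm_insert]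
    have hs : s.lcm f ≠ 0 := by
      simp only [Ne, Finset.lcm_eq_zero_iff]
      intro hc
      obtain ⟨i, hi, hi0⟩ := hc
      exact hf i (Finset.mem_insert_of_mem hi) hi0
    exact gcd_lcm_dvd (hf x (Finset.mem_insert_self x s)) hs hm
      (h x (Finset.mem_insert_self x s))
      (ih (fun i hi => hf i (Finset.mem_insert_of_mem hi))
        (fun i hi => h i (Finset.mem_insert_of_mem hi)))

lemma crt_two {N m : ℕ} {c : ℤ} (h : (Nat.gcd N m : ℤ) ∣ c) :
    ∃ t : ℤ, (m : ℤ) ∣ c + N * t := by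
  obtain ⟨w, hw⟩ := h
  refine ⟨-(Nat.gcdA N m * w), ⟨Nat.gcdB N m * w, ?_⟩⟩
  have hb := Nat.gcd_eq_gcd_ab N m
  rw [hw, hb]; ring

lemma crt {k : ℕ} (a : Fin k → ℤ) (n : Fin k → ℕ) (hn : ∀ i, 0 < n i)
    (h : ∀ i j, (Nat.gcd (n i) (n j) : ℤ) ∣ a i - a j) :
    ∃ e : ℤ, ∀ i, (n i : ℤ) ∣ a i + e := by
  induction k with
  | zero => exact ⟨0, fun i => i.elim0⟩
  | succ k ih =>
    obtain ⟨e, he⟩ := ih (fun i => a i.castSucc) (fun i => n i.castSucc)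
      (fun i => hn _) (fun i j => h _ _)
    set L := Fin.last k with hL
    set N := (Finset.univ : Finset (Fin k)).lcm (fun i => n i.castSucc) with hN
    have hN0 : N ≠ 0 := by
      simp only [hN, Ne, Finset.lcm_eq_zero_iff]
      intro hc
      obtain ⟨i, _, hi0⟩ := hc
      exact (hn i.castSucc).ne' hi0
    have hgcd : (Nat.gcd N (n L) : ℤ) ∣ a L + e := by
      have hdvd : ∀ i : Fin k, (Nat.gcd (n i.castSucc) (n L) : ℤ) ∣ a L + e := by
        intro i
        have h1 : (Nat.gcd (n i.castSucc) (n L) : ℤ) ∣ a L - a i.castSucc := by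
          have := h L i.castSucc
          rwa [Nat.gcd_comm] at this
        have h2 : (Nat.gcd (n i.castSucc) (n L) : ℤ) ∣ a i.castSucc + e :=
          dvd_trans (Int.natCast_dvd_natCast.mpr (Nat.gcd_dvd_left _ _)) (he i)
        have h3 : a L + e = (a L - a i.castSucc) + (a i.castSucc + e) := by ring
        rw [h3]
        exact dvd_add h1 h2
      rw [Int.natCast_dvd]
      refine finset_gcd_lcm_dvd _ _ (fun i _ => (hn _).ne') (hn L).ne' fun i _ => ?_
      rw [← Int.natCast_dvd]
      exact hdvd i
    obtain ⟨t, ht⟩ := crt_two hgcd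
    refine ⟨e + N * t, ?_⟩
    intro i
    refine Fin.lastCases ?_ (fun i => ?_) i
    · rw [← hL, show a L + (e + ↑N * t) = a L + e + ↑N * t by ring]
      exact ht
    · have hdN : ((n i.castSucc : ℕ) : ℤ) ∣ (N : ℤ) :=
        Int.natCast_dvd_natCast.mpr (Finset.dvd_lcm (Finset.mem_univ i))
      rw [show a i.castSucc + (e + ↑N * t) = (a i.castSucc + e) + ↑N * t by ring]
      exact dvd_add (he i) (hdN.mul_right t)

lemma padicValRat_prod_primes {S : Finset ℕ} (hS : ∀ p ∈ S, p.Prime) (E : ℕ → ℤ)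
    {q : ℕ} (hq : q.Prime) [Fact q.Prime] :
    padicValRat q (∏ p ∈ S, (p : ℚ) ^ (E p)) = if q ∈ S then E q else 0 := by
  classical
  induction S using Finset.induction_on with
  | empty => simp [padicValRat.one]
  | insert x s hx ih =>
    have hxp : x.Prime := hS x (Finset.mem_insert_self x s)
    have hsp : ∀ p ∈ s, p.Prime := fun p hp => hS p (Finset.mem_insert_of_mem hp)
    have hx0 : ((x : ℚ)) ≠ 0 := by exact_mod_cast hxp.ne_zero
    have hfac : ((x : ℚ)) ^ (E x) ≠ 0 := zpow_ne_zero _ hx0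
    have hprod : (∏ p ∈ s, (p : ℚ) ^ (E p)) ≠ 0 := by
      refine Finset.prod_ne_zero_iff.mpr fun p hp => ?_
      exact zpow_ne_zero _ (by exact_mod_cast (hsp p hp).ne_zero)
    rw [Finset.prod_insert hx, padicValRat.mul hfac hprod, ih hsp]
    have hvx : padicValRat q ((x : ℚ) ^ (E x)) = E x * padicValRat q (x : ℚ) :=
      padicValRat_zpow hx0 _
    have hvxq : padicValRat q (x : ℚ) = if q = x then 1 else 0 := by
      split
      · rename_i hqx; subst hqx
        exact_mod_cast padicValRat.self hq.one_lt
      · rename_i hqx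
        rw [padicValRat.of_nat]
        rw [padicValNat.eq_zero_of_not_dvd]
        · simp
        · exact fun hc => hqx ((Nat.prime_dvd_prime_iff_eq hq hxp).mp hc)
    rw [hvx, hvxq]
    by_cases hqs : q = x
    · subst hqs
      simp [hx, Finset.mem_insert]
    · by_cases hqm : q ∈ s <;> simp [hqs, hqm, Finset.mem_insert]

/-- **First quantifier elimination for `n`-th power predicates (existence).**
For positive rationals `u 0, …, u (ℓ-1)` and positive integers `n 0, …, n (ℓ-1)`,
there is a positive rational `x` with `u i * x` an `n i`-th power of a rational for all
`i`, if and only if `u i * (u j)⁻¹` is a `gcd (n i) (n j)`-th power of a rational for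
all `i ≠ j`. -/
theorem first_QE_for_roots (ℓ : ℕ) (u : Fin ℓ → ℚ) (hu : ∀ i, 0 < u i)
    (n : Fin ℓ → ℕ) (hn : ∀ i, 0 < n i) :
    (∃ x : ℚ, 0 < x ∧ ∀ i, ∃ y : ℚ, u i * x = y ^ n i) ↔
      ∀ i j : Fin ℓ, i ≠ j → ∃ y : ℚ, u i * (u j)⁻¹ = y ^ Nat.gcd (n i) (n j) := by
  classical
  constructor
  · rintro ⟨x, hx, hxy⟩ i j hij
    have hx0 : x ≠ 0 := hx.ne'
    have hui : u i ≠ 0 := (hu i).ne'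
    have huj : u j ≠ 0 := (hu j).ne'
    refine (rat_pow_iff (mul_pos (hu i) (inv_pos.mpr (hu j)))
      (Nat.gcd_pos_of_pos_left _ (hn i))).mpr ?_
    intro p hp
    haveI := Fact.mk hp
    obtain ⟨yi, hyi⟩ := hxy i
    obtain ⟨yj, hyj⟩ := hxy j
    have hyi0 : yi ≠ 0 := by
      intro hc; rw [hc, zero_pow (hn i).ne'] at hyi
      exact (mul_ne_zero hui hx0) hyi
    have hyj0 : yj ≠ 0 := by
      intro hc; rw [hc, zero_pow (hn j).ne'] at hyj
      exact (mul_ne_zero huj hx0) hyj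
    have e1 : padicValRat p (u i) + padicValRat p x = (n i : ℤ) * padicValRat p yi := by
      rw [← padicValRat.mul hui hx0, hyi, padicValRat.pow yi]
    have e2 : padicValRat p (u j) + padicValRat p x = (n j : ℤ) * padicValRat p yj := by
      rw [← padicValRat.mul huj hx0, hyj, padicValRat.pow yj]
    have e3 : padicValRat p (u i * (u j)⁻¹)
        = (n i : ℤ) * padicValRat p yi - (n j : ℤ) * padicValRat p yj := by
      rw [padicValRat.mul hui (inv_ne_zero huj), padicValRat.inv]
      linarith
    rw [e3]
    exact dvd_sub
      ((Int.natCast_dvd_natCast.mpr (Nat.gcd_dvd_left _ _)).mul_right _)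
      ((Int.natCast_dvd_natCast.mpr (Nat.gcd_dvd_right _ _)).mul_right _)
  · intro h
    have hpair : ∀ (p : ℕ), p.Prime → ∀ i j : Fin ℓ,
        (Nat.gcd (n i) (n j) : ℤ) ∣ padicValRat p (u i) - padicValRat p (u j) := by
      intro p hp i j
      haveI := Fact.mk hp
      by_cases hij : i = j
      · subst hij; simp
      have hii : 0 < u i * (u j)⁻¹ := mul_pos (hu i) (inv_pos.mpr (hu j))
      have hd := (rat_pow_iff hii (Nat.gcd_pos_of_pos_left _ (hn i))).mp (h i j hij) p hp
      have e3 : padicValRat p (u i * (u j)⁻¹)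
          = padicValRat p (u i) - padicValRat p (u j) := by
        rw [padicValRat.mul (hu i).ne' (inv_ne_zero (hu j).ne'), padicValRat.inv]
        ring
      rwa [e3] at hd
    have hE : ∀ p : ℕ, p.Prime → ∃ ep : ℤ, ∀ i, (n i : ℤ) ∣ padicValRat p (u i) + ep :=
      fun p hp => crt (fun i => padicValRat p (u i)) n hn (hpair p hp)
    let E : ℕ → ℤ := fun p => if hp : p.Prime then Classical.choose (hE p hp) else 0
    set S : Finset ℕ := Finset.univ.biUnion
      (fun i : Fin ℓ => (u i).num.natAbs.primeFactors ∪ (u i).den.primeFactors) with hS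
    have hSprime : ∀ p ∈ S, p.Prime := by
      intro p hp
      simp only [hS, Finset.mem_biUnion, Finset.mem_union] at hp
      obtain ⟨i, _, hp | hp⟩ := hp
      · exact Nat.prime_of_mem_primeFactors hp
      · exact Nat.prime_of_mem_primeFactors hp
    have hvS : ∀ (p : ℕ), p.Prime → p ∉ S → ∀ i, padicValRat p (u i) = 0 := by
      intro p hp hpS i
      haveI := Fact.mk hp
      have hnum : ¬ p ∣ (u i).num.natAbs := by
        intro hc
        exact hpS (by
          simp only [hS, Finset.mem_biUnion, Finset.mem_union]
          exact ⟨i, Finset.mem_univ i, Or.inl (Nat.mem_primeFactors.mpr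
            ⟨hp, hc, Int.natAbs_ne_zero.mpr (Rat.num_ne_zero.mpr (hu i).ne')⟩)⟩)
      have hden : ¬ p ∣ (u i).den := by
        intro hc
        exact hpS (by
          simp only [hS, Finset.mem_biUnion, Finset.mem_union]
          exact ⟨i, Finset.mem_univ i, Or.inr (Nat.mem_primeFactors.mpr
            ⟨hp, hc, (u i).den_nz⟩)⟩)
      show (padicValNat p (u i).num.natAbs : ℤ) - (padicValNat p (u i).den : ℤ) = 0
      rw [padicValNat.eq_zero_of_not_dvd hnum, padicValNat.eq_zero_of_not_dvd hden]
      simp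
    refine ⟨∏ p ∈ S, (p : ℚ) ^ (E p), ?_, ?_⟩
    · refine Finset.prod_pos fun p hp => ?_
      exact zpow_pos (by exact_mod_cast (hSprime p hp).pos) _
    · intro i
      have hxpos : (0:ℚ) < ∏ p ∈ S, (p : ℚ) ^ (E p) :=
        Finset.prod_pos fun p hp => zpow_pos (by exact_mod_cast (hSprime p hp).pos) _
      refine (rat_pow_iff (mul_pos (hu i) hxpos) (hn i)).mpr ?_
      intro p hp
      haveI := Fact.mk hp
      rw [padicValRat.mul (hu i).ne' hxpos.ne',
        padicValRat_prod_primes hSprime E hp]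
      by_cases hpS : p ∈ S
      · rw [if_pos hpS]
        have : E p = Classical.choose (hE p hp) := dif_pos hp
        rw [this]
        exact Classical.choose_spec (hE p hp) i
      · rw [if_neg hpS, hvS p hp hpS i]
        simp
end

section
/- Second quantifier elimination for n-th power predicates: let ℓ ≥ 1 and l ≥ 0, let u_0, …, u_{ℓ−1} and v_0, …, v_{l−1} be positive rational numbers, let n_0, …, n_{ℓ−1} and m_0, …, m_{l−1} be positive integers, let n be the least common multiple of the n_i, let c_0, …, c_{ℓ−1} be integers with ∑_{i<ℓ} c_i·(n/n_i) = 1, and set a = ∏_{i<ℓ} u_i^{−c_i·(n/n_i)}. Then there exists a positive rational x such that for every j < ℓ the number u_j·x is an n_j-th power of a rational number and for every k < l the number v_k·x is not an m_k-th power of a rational number, if and only if: for all i ≠ j the number u_i·u_j^{−1} is a gcd(n_i, n_j)-th power of a rational number, and for every k < l with m_k dividing n the number a·v_k is not an m_k-th power of a rational number. -/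
private lemma aux_dvd {a b N : ℕ} (ha : 0 < a) (haN : a ∣ N) (hbN : b ∣ N) :
    b ∣ Nat.gcd a b * (N / a) := by
  have hL : Nat.lcm a b ∣ N := Nat.lcm_dvd haN hbN
  obtain ⟨t, ht⟩ := hL
  have key : a * (Nat.gcd a b * (N / a)) = a * (b * t) := by
    rw [← mul_assoc, mul_comm a (Nat.gcd a b), mul_assoc, Nat.mul_div_cancel' haN, ht,
      ← mul_assoc, Nat.gcd_mul_lcm, mul_assoc]
  exact ⟨t, Nat.eq_of_mul_eq_mul_left ha key⟩

private lemma pos_root {q y : ℚ} {k : ℕ} (hq : 0 < q) (h : q = y ^ k) :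
    ∃ y' : ℚ, 0 < y' ∧ q = y' ^ k := by
  rcases Nat.eq_zero_or_pos k with rfl | hk
  · exact ⟨1, one_pos, by simpa using h⟩
  have hy : y ≠ 0 := by
    rintro rfl
    rw [zero_pow hk.ne'] at h; exact absurd h hq.ne'
  refine ⟨|y|, abs_pos.mpr hy, ?_⟩
  rw [← abs_pow, ← h, abs_of_pos hq]

private lemma zpow_sum'' {ι : Type*} [DecidableEq ι] (s : Finset ι) (x : ℚ) (hx : x ≠ 0) (e : ι → ℤ) :
    ∏ i ∈ s, x ^ e i = x ^ (∑ i ∈ s, e i) := by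
  induction s using Finset.induction with
  | empty => simp
  | insert _ _ h ih => rw [Finset.prod_insert h, Finset.sum_insert h, ih, zpow_add₀ hx]

/-- **Second quantifier elimination for `n`-th power predicates.**
With `u j` positive rationals, `n j` positive integers, `N = lcm (n j)`,
`∑ i, c i * (N / n i) = 1` and `a = ∏ i, (u i) ^ (-(c i * (N / n i)))`, and with `v k`
positive rationals and `m k` positive integers: there exists a positive rational `x` such
that each `u j * x` is an `n j`-th power and no `v k * x` is an `m k`-th power, if and only
if each `u i * (u j)⁻¹` (for `i ≠ j`) is a `gcd (n i) (n j)`-th power and for every `k`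
with `m k ∣ N` the number `a * v k` is not an `m k`-th power. -/
theorem second_QE_for_roots (ℓ l : ℕ) (hℓ : 1 ≤ ℓ) (u : Fin ℓ → ℚ)
    (hu : ∀ i, 0 < u i) (n : Fin ℓ → ℕ) (hn : ∀ i, 0 < n i)
    (v : Fin l → ℚ) (hv : ∀ k, 0 < v k) (m : Fin l → ℕ) (hm : ∀ k, 0 < m k)
    (c : Fin ℓ → ℤ)
    (hc : ∑ i, c i * ((Finset.univ.lcm n / n i : ℕ) : ℤ) = 1) :
    (∃ x : ℚ, 0 < x ∧ (∀ j, ∃ y : ℚ, u j * x = y ^ n j) ∧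
        ∀ k, ¬ ∃ y : ℚ, v k * x = y ^ m k) ↔
      ((∀ i j : Fin ℓ, i ≠ j → ∃ y : ℚ, u i * (u j)⁻¹ = y ^ Nat.gcd (n i) (n j)) ∧
        ∀ k, m k ∣ Finset.univ.lcm n →
          ¬ ∃ y : ℚ,
            (∏ i, u i ^ (-(c i * ((Finset.univ.lcm n / n i : ℕ) : ℤ)))) * v k
              = y ^ m k) := by
  set N : ℕ := Finset.univ.lcm n with hNdef
  set e : Fin ℓ → ℤ := fun i => c i * ((N / n i : ℕ) : ℤ) with hedef
  set a : ℚ := ∏ i, u i ^ (-(e i)) with hadef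
  have hnN : ∀ i, n i ∣ N := fun i => Finset.dvd_lcm (Finset.mem_univ i)
  have hue : ∀ i, (u i : ℚ) ≠ 0 := fun i => (hu i).ne'
  have ha : 0 < a := Finset.prod_pos fun i _ => zpow_pos (hu i) _
  have hniN : ∀ i, ((n i : ℤ)) * e i = c i * (N : ℤ) := by
    intro i
    have h : ((N / n i : ℕ) : ℤ) * (n i : ℤ) = (N : ℤ) := by
      exact_mod_cast Nat.div_mul_cancel (hnN i)
    rw [hedef]
    dsimp only
    linear_combination (c i) * h
  constructor
  · rintro ⟨x, hx, h1, h2⟩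
    have h1' : ∀ j, ∃ y : ℚ, 0 < y ∧ u j * x = y ^ n j := by
      intro j
      obtain ⟨y, hy⟩ := h1 j
      exact pos_root (mul_pos (hu j) hx) hy
    choose y hy0 hy using h1'
    constructor
    · intro i j hij
      set d := Nat.gcd (n i) (n j) with hd
      refine ⟨y i ^ (n i / d) / y j ^ (n j / d), ?_⟩
      have : (y i ^ (n i / d) / y j ^ (n j / d)) ^ d = y i ^ n i / y j ^ n j := by
        rw [div_pow, ← pow_mul, ← pow_mul, Nat.div_mul_cancel (Nat.gcd_dvd_left _ _),
          Nat.div_mul_cancel (Nat.gcd_dvd_right _ _)]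
      rw [this, ← hy i, ← hy j, mul_div_mul_right _ _ hx.ne']
      exact (div_eq_mul_inv _ _).symm
    · intro k hk
      rintro ⟨w, hw⟩
      apply h2 k
      set z : ℚ := ∏ j, y j ^ (c j) with hzdef
      have hz : z ≠ 0 := (Finset.prod_pos fun j _ => zpow_pos (hy0 j) _).ne'
      have key : a * z ^ N = x := by
        calc a * z ^ N = ∏ i, (u i ^ (-(e i)) * (y i) ^ ((c i) * (N : ℤ))) := by
              rw [hadef, hzdef, ← Finset.prod_pow, ← Finset.prod_mul_distrib]
              refine Finset.prod_congr rfl fun i _ => ?_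
              rw [← zpow_natCast (y i ^ c i) N, ← zpow_mul]
          _ = ∏ i, x ^ e i := by
              refine Finset.prod_congr rfl fun i _ => ?_
              have h1 : (y i) ^ ((c i) * (N : ℤ)) = (u i * x) ^ e i := by
                rw [← hniN i, zpow_mul, zpow_natCast, ← hy i]
              rw [h1, mul_zpow, ← mul_assoc, zpow_neg,
                inv_mul_cancel₀ (zpow_ne_zero _ (hue i)), one_mul]
          _ = x ^ (∑ i, e i) := zpow_sum'' _ x hx.ne' e
          _ = x := by rw [hc, zpow_one]
      refine ⟨w * z ^ (N / m k), ?_⟩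
      have hzN : z ^ N = (z ^ (N / m k)) ^ m k := by
        rw [← pow_mul, Nat.div_mul_cancel hk]
      rw [mul_pow, ← hzN, ← hw, ← key]
      ring
  · rintro ⟨hP, hQ⟩
    have stepA : ∀ j, ∃ Y : ℚ, Y ≠ 0 ∧ u j * a = Y ^ n j := by
      intro j
      have factor : ∀ i : Fin ℓ, ∃ w : ℚ, w ≠ 0 ∧ (u j * (u i)⁻¹) ^ e i = w ^ n j := by
        intro i
        by_cases hij : i = j
        · subst hij
          exact ⟨1, one_ne_zero, by rw [mul_inv_cancel₀ (hue i), one_zpow, one_pow]⟩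
        · obtain ⟨t, ht⟩ := hP i j hij
          have hg : 0 < Nat.gcd (n i) (n j) := Nat.gcd_pos_of_pos_left _ (hn i)
          have ht0 : t ≠ 0 := by
            intro h0
            rw [h0, zero_pow hg.ne'] at ht
            exact (mul_pos (hu i) (inv_pos.mpr (hu j))).ne' ht
          have hbase : u j * (u i)⁻¹ = (t⁻¹) ^ Nat.gcd (n i) (n j) := by
            rw [inv_pow, ← ht, mul_inv, inv_inv, mul_comm]
          obtain ⟨s, hs⟩ := aux_dvd (hn i) (hnN i) (hnN j)
          refine ⟨(t⁻¹) ^ (c i * s), zpow_ne_zero _ (inv_ne_zero ht0), ?_⟩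
          rw [hbase, ← zpow_natCast t⁻¹ (Nat.gcd (n i) (n j)), ← zpow_mul,
            ← zpow_natCast ((t⁻¹) ^ (c i * s)) (n j), ← zpow_mul]
          congr 1
          have hs' : ((Nat.gcd (n i) (n j) : ℤ)) * ((N / n i : ℕ) : ℤ)
              = (n j : ℤ) * (s : ℤ) := by exact_mod_cast hs
          rw [hedef]
          dsimp only
          linear_combination (c i) * hs'
      choose w hw0 hw using factor
      refine ⟨∏ i, w i, Finset.prod_ne_zero_iff.mpr (fun i _ => hw0 i), ?_⟩
      have main : ∏ i, (u j * (u i)⁻¹) ^ e i = u j * a := by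
        calc ∏ i, (u j * (u i)⁻¹) ^ e i
            = (∏ i, u j ^ e i) * ∏ i, u i ^ (-(e i)) := by
              rw [← Finset.prod_mul_distrib]
              refine Finset.prod_congr rfl fun i _ => ?_
              rw [mul_zpow, inv_zpow, ← zpow_neg]
          _ = u j ^ (∑ i, e i) * a := by rw [zpow_sum'' _ _ (hue j), hadef]
          _ = u j * a := by rw [hc, zpow_one]
      rw [← main, ← Finset.prod_pow]
      exact Finset.prod_congr rfl fun i _ => hw i
    -- choose a big prime
    set B : ℕ := Finset.univ.sup fun k : Fin l => max ((a * v k).num.natAbs) ((a * v k).den)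
      with hBdef
    obtain ⟨p, hpB, hp⟩ := Nat.exists_infinite_primes (B + 1)
    haveI : Fact p.Prime := ⟨hp⟩
    have hp0 : (p : ℚ) ≠ 0 := by exact_mod_cast hp.ne_zero
    have hval : ∀ k, padicValRat p (a * v k) = 0 := by
      intro k
      have hq : a * v k ≠ 0 := (mul_pos ha (hv k)).ne'
      have hBle : max ((a * v k).num.natAbs) ((a * v k).den) ≤ B :=
        Finset.le_sup (f := fun k : Fin l => max ((a * v k).num.natAbs) ((a * v k).den))
          (Finset.mem_univ k)
      rw [max_le_iff] at hBle
      have hnum : ¬ (p : ℤ) ∣ (a * v k).num := by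
        intro hdvd
        have h1 : p ∣ (a * v k).num.natAbs := Int.natCast_dvd.mp hdvd
        have hpos : 0 < (a * v k).num.natAbs :=
          Int.natAbs_pos.mpr (Rat.num_ne_zero.mpr hq)
        have hle : p ≤ (a * v k).num.natAbs := Nat.le_of_dvd hpos h1
        omega
      have hden : ¬ p ∣ (a * v k).den := by
        intro hdvd
        have hle : p ≤ (a * v k).den := Nat.le_of_dvd (a * v k).pos hdvd
        omega
      rw [padicValRat, padicValInt.eq_zero_of_not_dvd hnum,
        padicValNat.eq_zero_of_not_dvd hden]
      simp
    refine ⟨a * (p : ℚ) ^ N, mul_pos ha (pow_pos (by exact_mod_cast hp.pos) N), ?_, ?_⟩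
    · intro j
      obtain ⟨Y, hY0, hY⟩ := stepA j
      refine ⟨Y * (p : ℚ) ^ (N / n j), ?_⟩
      rw [mul_pow, ← pow_mul, Nat.div_mul_cancel (hnN j), ← hY]
      ring
    · intro k
      rintro ⟨w, hw⟩
      have hvk : v k * (a * (p : ℚ) ^ N) = (a * v k) * (p : ℚ) ^ N := by ring
      have hw0 : w ≠ 0 := by
        intro h0
        rw [h0, zero_pow (hm k).ne'] at hw
        exact (mul_pos (hv k) (mul_pos ha (pow_pos (by exact_mod_cast hp.pos) N))).ne' hw
      by_cases hk : m k ∣ N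
      · apply hQ k hk
        refine ⟨w / (p : ℚ) ^ (N / m k), ?_⟩
        have hpN : ((p : ℚ) ^ (N / m k)) ^ m k = (p : ℚ) ^ N := by
          rw [← pow_mul, Nat.div_mul_cancel hk]
        rw [div_pow, hpN, ← hw, hvk]
        field_simp
      · exfalso; apply hk
        have havk : a * v k ≠ 0 := (mul_pos ha (hv k)).ne'
        have h1 : padicValRat p (v k * (a * (p : ℚ) ^ N)) = N := by
          rw [hvk, padicValRat.mul havk (pow_ne_zero _ hp0),
            padicValRat.pow (p : ℚ), hval k, padicValRat.self hp.one_lt]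
          ring
        have h2 : padicValRat p (w ^ m k) = (m k : ℤ) * padicValRat p w := by
          rw [padicValRat.pow w]
        rw [hw, h2] at h1
        have : (m k : ℤ) ∣ (N : ℤ) := Dvd.intro _ h1
        exact_mod_cast this
end

section
/- Third quantifier elimination for n-th power predicates: let α, ℓ, l ≥ 0 with ℓ ≥ 1, let t_0, …, t_{α−1}, u_0, …, u_{ℓ−1}, v_0, …, v_{l−1} be positive rational numbers, let n_0, …, n_{ℓ−1} and m_0, …, m_{l−1} be positive integers, let n be the least common multiple of the n_i, let c_0, …, c_{ℓ−1} be integers with ∑_{i<ℓ} c_i·(n/n_i) = 1, and set a = ∏_{i<ℓ} u_i^{−c_i·(n/n_i)}. Then there exists a positive rational x with x ≠ t_ι for all ι < α, such that for every j < ℓ the number u_j·x is an n_j-th power of a rational number and for every k < l the number v_k·x is not an m_k-th power of a rational number, if and only if: for all i ≠ j the number u_i·u_j^{−1} is a gcd(n_i, n_j)-th power of a rational number, and for every k < l with m_k dividing n the number a·v_k is not an m_k-th power of a rational number. -/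
lemma aux_zpow_sum {ι : Type*} (x : ℚ) (hx : x ≠ 0) (s : Finset ι) (d : ι → ℤ) :
    x ^ (∑ i ∈ s, d i) = ∏ i ∈ s, x ^ d i := by
  classical
  induction s using Finset.induction_on with
  | empty => simp
  | insert _ _ h ih => rw [Finset.sum_insert h, Finset.prod_insert h, zpow_add₀ hx, ih]

lemma aux_val_zero (p : ℕ) (q : ℚ) (hq : q ≠ 0)
    (h1 : q.num.natAbs < p) (h2 : q.den < p) : padicValRat p q = 0 := by
  unfold padicValRat padicValInt
  rw [padicValNat.eq_zero_of_not_dvd, padicValNat.eq_zero_of_not_dvd]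
  · simp
  · exact fun h => absurd (Nat.le_of_dvd q.pos h) (not_le.2 h2)
  · exact fun h => absurd (Nat.le_of_dvd (Int.natAbs_pos.2 (Rat.num_ne_zero.2 hq)) h)
      (not_le.2 h1)

lemma aux_core {ℓ : ℕ} (f : Fin ℓ → ℚ) (x : ℚ) (hx : x ≠ 0) (d : Fin ℓ → ℤ) :
    (∏ i, f i ^ d i) * x ^ (∑ i, d i) = ∏ i, (f i * x) ^ d i := by
  rw [aux_zpow_sum x hx, ← Finset.prod_mul_distrib]
  exact Finset.prod_congr rfl fun i _ => (mul_zpow (f i) x (d i)).symm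

/-- **Third quantifier elimination for `n`-th power predicates.**
Like the second quantifier elimination, but additionally the witness `x` can be chosen
different from any of the finitely many positive rationals `t ι`. -/
theorem third_QE_for_roots (α ℓ l : ℕ) (hℓ : 1 ≤ ℓ) (t : Fin α → ℚ)
    (ht : ∀ ι, 0 < t ι) (u : Fin ℓ → ℚ)
    (hu : ∀ i, 0 < u i) (n : Fin ℓ → ℕ) (hn : ∀ i, 0 < n i)
    (v : Fin l → ℚ) (hv : ∀ k, 0 < v k) (m : Fin l → ℕ) (hm : ∀ k, 0 < m k)
    (c : Fin ℓ → ℤ)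
    (hc : ∑ i, c i * ((Finset.univ.lcm n / n i : ℕ) : ℤ) = 1) :
    (∃ x : ℚ, 0 < x ∧ (∀ ι, x ≠ t ι) ∧ (∀ j, ∃ y : ℚ, u j * x = y ^ n j) ∧
        ∀ k, ¬ ∃ y : ℚ, v k * x = y ^ m k) ↔
      ((∀ i j : Fin ℓ, i ≠ j → ∃ y : ℚ, u i * (u j)⁻¹ = y ^ Nat.gcd (n i) (n j)) ∧
        ∀ k, m k ∣ Finset.univ.lcm n →
          ¬ ∃ y : ℚ,
            (∏ i, u i ^ (-(c i * ((Finset.univ.lcm n / n i : ℕ) : ℤ)))) * v k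
              = y ^ m k) := by
  set N : ℕ := Finset.univ.lcm n with hNdef
  set a : ℚ := ∏ i, u i ^ (-(c i * ((N / n i : ℕ) : ℤ))) with hadef
  have hdvdN : ∀ i, n i ∣ N := fun i => Finset.dvd_lcm (Finset.mem_univ i)
  have hne : ∀ i, n i * (N / n i) = N := fun i => Nat.mul_div_cancel' (hdvdN i)
  have hN0 : N ≠ 0 := by
    intro h
    rw [h] at hc
    simp at hc
  have ha : 0 < a := Finset.prod_pos fun i _ => zpow_pos (hu i) _
  constructor
  · rintro ⟨x, hx, hxt, hupow, hvpow⟩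
    choose y hy using hupow
    have hy0 : ∀ j, y j ≠ 0 := by
      intro j h
      have := hy j
      rw [h, zero_pow (hn j).ne'] at this
      exact (mul_pos (hu j) hx).ne' this
    constructor
    · intro i j hij
      set g := Nat.gcd (n i) (n j) with hg
      refine ⟨y i ^ (n i / g) * (y j ^ (n j / g))⁻¹, ?_⟩
      rw [mul_pow, inv_pow, ← pow_mul, ← pow_mul,
        Nat.div_mul_cancel (Nat.gcd_dvd_left _ _),
        Nat.div_mul_cancel (Nat.gcd_dvd_right _ _), ← hy i, ← hy j]
      field_simp
    · -- x = a * Y ^ N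
      set Y : ℚ := ∏ i, y i ^ c i with hYdef
      have hxa : x = a * Y ^ N := by
        have key : a⁻¹ * x = Y ^ N := by
          have h1 : a⁻¹ = ∏ i, u i ^ (c i * ((N / n i : ℕ) : ℤ)) := by
            rw [hadef, ← Finset.prod_inv_distrib]
            exact Finset.prod_congr rfl fun i _ => by rw [← zpow_neg, neg_neg]
          calc a⁻¹ * x = (∏ i, u i ^ (c i * ((N / n i : ℕ) : ℤ)))
                * x ^ (∑ i, c i * ((N / n i : ℕ) : ℤ)) := by rw [h1, hc, zpow_one]
            _ = ∏ i, (u i * x) ^ (c i * ((N / n i : ℕ) : ℤ)) := aux_core u x hx.ne' _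
            _ = ∏ i, (y i ^ c i) ^ ((N : ℕ) : ℤ) := by
                refine Finset.prod_congr rfl fun i _ => ?_
                rw [hy i, ← zpow_natCast (y i) (n i), ← zpow_mul, ← zpow_mul]
                congr 1
                have hcast : ((n i : ℕ) : ℤ) * ((N / n i : ℕ) : ℤ) = (N : ℤ) := by
                  exact_mod_cast congrArg (Nat.cast : ℕ → ℤ) (hne i)
                linear_combination c i * hcast
            _ = Y ^ N := by
                rw [Finset.prod_zpow, zpow_natCast]
        rw [← key, ← mul_assoc, mul_inv_cancel₀ ha.ne', one_mul]
      intro k hk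
      rintro ⟨z, hz⟩
      refine hvpow k ⟨z * Y ^ (N / m k), ?_⟩
      rw [hxa, mul_pow, ← pow_mul, Nat.div_mul_cancel hk, ← hz]
      ring
  · rintro ⟨h1, h2⟩
    -- Step 1: each `u j * a` is an `n j`-th power
    have hupa : ∀ j, ∃ w : ℚ, w ≠ 0 ∧ u j * a = w ^ n j := by
      intro j
      have hz : ∀ i : Fin ℓ, ∃ z : ℚ, z ≠ 0 ∧
          (u j * (u i)⁻¹) ^ ((N / n i : ℕ) : ℤ) = z ^ n j := by
        intro i
        by_cases hij : i = j
        · subst hij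
          exact ⟨1, one_ne_zero, by rw [mul_inv_cancel₀ (hu i).ne', one_zpow, one_pow]⟩
        · obtain ⟨w, hw⟩ := h1 j i (Ne.symm hij)
          have hw0 : w ≠ 0 := by
            intro h
            rw [h, zero_pow (Nat.gcd_pos_of_pos_left _ (hn j)).ne'] at hw
            exact (mul_pos (hu j) (inv_pos.2 (hu i))).ne' hw
          have hLN : Nat.lcm (n j) (n i) ∣ N := Nat.lcm_dvd (hdvdN j) (hdvdN i)
          have hkey : Nat.gcd (n j) (n i) * (N / n i) = n j * (N / Nat.lcm (n j) (n i)) := by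
            have h3 : Nat.gcd (n j) (n i) * (N / n i) * n i = Nat.gcd (n j) (n i) * N := by
              rw [mul_assoc, Nat.div_mul_cancel (hdvdN i)]
            have h4 : n j * (N / Nat.lcm (n j) (n i)) * n i = Nat.gcd (n j) (n i) * N := by
              calc n j * (N / Nat.lcm (n j) (n i)) * n i
                  = (n j * n i) * (N / Nat.lcm (n j) (n i)) := by ring
                _ = (Nat.gcd (n j) (n i) * Nat.lcm (n j) (n i))
                      * (N / Nat.lcm (n j) (n i)) := by rw [Nat.gcd_mul_lcm]
                _ = Nat.gcd (n j) (n i) * (Nat.lcm (n j) (n i)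
                      * (N / Nat.lcm (n j) (n i))) := by ring
                _ = Nat.gcd (n j) (n i) * N := by rw [Nat.mul_div_cancel' hLN]
            exact Nat.eq_of_mul_eq_mul_right (hn i) (h3.trans h4.symm)
          refine ⟨w ^ (N / Nat.lcm (n j) (n i)), pow_ne_zero _ hw0, ?_⟩
          rw [hw, zpow_natCast, ← pow_mul, hkey, mul_comm (n j), pow_mul]
      choose z hz0 hzeq using hz
      refine ⟨∏ i, z i ^ c i, ?_, ?_⟩
      · rw [Finset.prod_ne_zero_iff]
        exact fun i _ => zpow_ne_zero _ (hz0 i)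
      · have ha' : a = ∏ i, ((u i)⁻¹) ^ (c i * ((N / n i : ℕ) : ℤ)) := by
          rw [hadef]
          exact Finset.prod_congr rfl fun i _ => by rw [zpow_neg, inv_zpow]
        calc u j * a = a * u j ^ (∑ i, c i * ((N / n i : ℕ) : ℤ)) := by
              rw [hc, zpow_one, mul_comm]
          _ = ∏ i, ((u i)⁻¹ * u j) ^ (c i * ((N / n i : ℕ) : ℤ)) := by
              rw [ha']; exact aux_core _ _ (hu j).ne' _
          _ = ∏ i, ((u j * (u i)⁻¹) ^ ((N / n i : ℕ) : ℤ)) ^ c i := by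
              refine Finset.prod_congr rfl fun i _ => ?_
              rw [mul_comm ((u i)⁻¹) (u j), mul_comm (c i), zpow_mul]
          _ = ∏ i, (z i ^ n j) ^ c i := by
              exact Finset.prod_congr rfl fun i _ => by rw [hzeq i]
          _ = ∏ i, (z i ^ c i) ^ ((n j : ℕ) : ℤ) := by
              refine Finset.prod_congr rfl fun i _ => ?_
              rw [← zpow_natCast (z i) (n j), ← zpow_mul, ← zpow_mul, mul_comm]
          _ = (∏ i, z i ^ c i) ^ n j := by rw [Finset.prod_zpow, zpow_natCast]
    -- Step 2: choose a large prime
    classical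
    set S : Finset ℚ :=
      insert a (Finset.image t Finset.univ ∪
        Finset.image (fun k => a * v k) Finset.univ) with hSdef
    set B : ℕ := S.sup fun q => max q.num.natAbs q.den with hBdef
    obtain ⟨p, hpB, hp⟩ := Nat.exists_infinite_primes (B + 1)
    haveI : Fact p.Prime := ⟨hp⟩
    have hval0 : ∀ q ∈ S, q ≠ 0 → padicValRat p q = 0 := by
      intro q hq hq0
      refine aux_val_zero p q hq0 ?_ ?_
      · exact lt_of_le_of_lt
          (le_trans (le_max_left _ _) (Finset.le_sup (f := fun q => max q.num.natAbs q.den) hq))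
          (lt_of_lt_of_le (Nat.lt_succ_self B) hpB)
      · exact lt_of_le_of_lt
          (le_trans (le_max_right _ _) (Finset.le_sup (f := fun q => max q.num.natAbs q.den) hq))
          (lt_of_lt_of_le (Nat.lt_succ_self B) hpB)
    have hpq0 : (p : ℚ) ≠ 0 := Nat.cast_ne_zero.2 hp.pos.ne'
    have hvala : padicValRat p a = 0 := hval0 a (Finset.mem_insert_self _ _) ha.ne'
    have hvalp : padicValRat p ((p : ℚ) ^ N) = N := by
      rw [padicValRat.pow _, padicValRat.self hp.one_lt, mul_one]
    refine ⟨a * (p : ℚ) ^ N, mul_pos ha (pow_pos (by exact_mod_cast hp.pos) N), ?_, ?_, ?_⟩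
    · intro ι heq
      have hmt : t ι ∈ S := Finset.mem_insert_of_mem
        (Finset.mem_union_left _ (Finset.mem_image_of_mem t (Finset.mem_univ ι)))
      have hvx : padicValRat p (a * (p : ℚ) ^ N) = N := by
        rw [padicValRat.mul ha.ne' (pow_ne_zero _ hpq0), hvala, hvalp, zero_add]
      rw [heq, hval0 (t ι) hmt (ht ι).ne'] at hvx
      exact hN0 (by exact_mod_cast hvx.symm)
    · intro j
      obtain ⟨w, hw0, hw⟩ := hupa j
      refine ⟨w * (p : ℚ) ^ (N / n j), ?_⟩
      rw [mul_pow, ← hw, ← pow_mul, Nat.div_mul_cancel (hdvdN j)]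
      ring
    · rintro k ⟨zz, hzz⟩
      have heq2 : v k * (a * (p : ℚ) ^ N) = (a * v k) * (p : ℚ) ^ N := by ring
      rw [heq2] at hzz
      have hav0 : (0 : ℚ) < a * v k := mul_pos ha (hv k)
      have hmav : a * v k ∈ S := Finset.mem_insert_of_mem
        (Finset.mem_union_right _ (Finset.mem_image_of_mem _ (Finset.mem_univ k)))
      have hvalav : padicValRat p (a * v k) = 0 := hval0 _ hmav hav0.ne'
      have hz0 : zz ≠ 0 := by
        intro h
        rw [h, zero_pow (hm k).ne'] at hzz
        exact (mul_pos hav0 (pow_pos (by exact_mod_cast hp.pos) N)).ne' hzz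
      have hval1 : (N : ℤ) = (m k : ℤ) * padicValRat p zz := by
        have hcongr := congrArg (padicValRat p) hzz
        rwa [padicValRat.mul hav0.ne' (pow_ne_zero _ hpq0), hvalav, hvalp, zero_add,
          padicValRat.pow _] at hcongr
      have hdk : m k ∣ N := by
        have : (m k : ℤ) ∣ (N : ℤ) := ⟨padicValRat p zz, hval1⟩
        exact_mod_cast this
      refine h2 k hdk ⟨zz / (p : ℚ) ^ (N / m k), ?_⟩
      rw [div_pow, ← pow_mul, Nat.div_mul_cancel hdk, ← hzz,
        mul_div_cancel_right₀ _ (pow_ne_zero _ hpq0)]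
end

section
/- Soundness of the axiom scheme M_{16,n} in the positive rationals: let n ≥ 1, let ℓ ≥ 0, let v_1, …, v_ℓ be positive rational numbers, and let m_1, …, m_ℓ be positive integers none of which divides n. Then the set of positive rational numbers x such that for every k ≤ ℓ the number x^n · v_k is not an m_k-th power of a rational number is infinite. -/
/-- **Soundness of the axiom scheme `M₁₆,ₙ` in the positive rationals.**
For `n ≥ 1`, positive rationals `v 1, …, v ℓ` and positive integers `m 1, …, m ℓ` none of
which divides `n`, there are infinitely many positive rationals `x` such that no
`x ^ n * v k` is an `m k`-th power of a rational. -/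
theorem M16_sound (n : ℕ) (hn : 1 ≤ n) (ℓ : ℕ) (v : Fin ℓ → ℚ) (hv : ∀ k, 0 < v k)
    (m : Fin ℓ → ℕ) (hm : ∀ k, 0 < m k) (hnd : ∀ k, ¬ m k ∣ n) :
    {x : ℚ | 0 < x ∧ ∀ k, ¬ ∃ y : ℚ, x ^ n * v k = y ^ m k}.Infinite := by
  set N : ℕ := ∏ k, (v k).num.natAbs * (v k).den with hN
  have hNpos : 0 < N := by
    apply Finset.prod_pos
    intro k _
    exact Nat.mul_pos (Int.natAbs_pos.mpr (Rat.num_ne_zero.mpr (hv k).ne')) (v k).pos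
  have hS : {p : ℕ | p.Prime ∧ N < p}.Infinite := by
    have := Nat.infinite_setOf_prime.diff (Set.finite_le_nat N)
    apply this.mono
    intro p hp
    exact ⟨hp.1, not_le.mp hp.2⟩
  have key : ∀ p ∈ {p : ℕ | p.Prime ∧ N < p},
      (p : ℚ) ∈ {x : ℚ | 0 < x ∧ ∀ k, ¬ ∃ y : ℚ, x ^ n * v k = y ^ m k} := by
    rintro p ⟨hp, hpN⟩
    haveI : Fact p.Prime := ⟨hp⟩
    refine ⟨by exact_mod_cast hp.pos, ?_⟩
    rintro k ⟨y, hy⟩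
    have hvk0 : v k ≠ 0 := (hv k).ne'
    have hy0 : y ≠ 0 := by
      intro h
      rw [h, zero_pow (hm k).ne'] at hy
      exact (mul_pos (pow_pos (by exact_mod_cast hp.pos) n) (hv k)).ne' hy
    have hpv : padicValRat p (v k) = 0 := by
      have hdvd : (v k).num.natAbs * (v k).den ∣ N := Finset.dvd_prod_of_mem _ (Finset.mem_univ k)
      have hnum : ¬ (p : ℤ) ∣ (v k).num := by
        rw [Int.natCast_dvd]
        intro h
        exact absurd (Nat.le_of_dvd hNpos ((h.mul_right _).trans hdvd)) (not_le.mpr hpN)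
      have hden : ¬ p ∣ (v k).den := by
        intro h
        exact absurd (Nat.le_of_dvd hNpos ((h.mul_left _).trans hdvd)) (not_le.mpr hpN)
      rw [padicValRat_def, padicValInt.eq_zero_of_not_dvd hnum,
        padicValNat.eq_zero_of_not_dvd hden]
      simp
    have hval : padicValRat p ((p : ℚ) ^ n * v k) = n := by
      rw [padicValRat.mul (pow_ne_zero _ (by exact_mod_cast hp.ne_zero)) hvk0,
        padicValRat.pow (p : ℚ), padicValRat.self hp.one_lt, hpv]
      simp
    have hval2 : padicValRat p (y ^ m k) = m k * padicValRat p y :=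
      padicValRat.pow y
    rw [hy, hval2] at hval
    have : (m k : ℤ) ∣ (n : ℤ) := ⟨padicValRat p y, hval.symm⟩
    exact hnd k (Int.natCast_dvd_natCast.mp this)
  have himg : (((↑) : ℕ → ℚ) '' {p : ℕ | p.Prime ∧ N < p}).Infinite :=
    hS.image (Set.injOn_of_injective Nat.cast_injective)
  apply himg.mono
  rintro x ⟨p, hp, rfl⟩
  exact key p hp
end

section
/- Quantifier elimination for the multiplicative reals with positivity: let L be the first-order language with one binary function symbol (multiplication), one unary function symbol (inverse), constant symbols 0, 1, −1, and one unary relation symbol P. Make ℝ an L-structure by interpreting multiplication as real multiplication, inverse as x ↦ x^{−1} with 0^{−1} = 0, the constants as 0, 1, −1, and P(x) as 'x > 0'. Then this structure admits quantifier elimination: for every L-formula φ(x_1, …, x_k) there is a quantifier-free L-formula ψ(x_1, …, x_k) satisfied by exactly the same tuples of real numbers as φ. -/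
open FirstOrder Language

/-- Function symbols of the language `L`: constants `0`, `1`, `−1`, a unary inverse, and
a binary multiplication. -/
inductive RealMulFunc : ℕ → Type
  | zero : RealMulFunc 0
  | one : RealMulFunc 0
  | negOne : RealMulFunc 0
  | inv : RealMulFunc 1
  | mul : RealMulFunc 2

/-- Relation symbols of `L`: a single unary positivity predicate `P`. -/
inductive PosRel : ℕ → Type
  | pos : PosRel 1

/-- The language `{×, ⁻¹, 0, 1, −1, P}`. -/
def LmulPos : Language := ⟨RealMulFunc, PosRel⟩

/-- `ℝ` as an `LmulPos`-structure: multiplication is real multiplication, inverse is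
`x ↦ x⁻¹` (with `0⁻¹ = 0`), the constants are `0`, `1`, `−1`, and `P(x)` means `x > 0`. -/
noncomputable instance : LmulPos.Structure ℝ where
  funMap
    | .zero => fun _ => 0
    | .one => fun _ => 1
    | .negOne => fun _ => -1
    | .inv => fun v => (v 0)⁻¹
    | .mul => fun v => v 0 * v 1
  RelMap
    | .pos => fun v => 0 < v 0

namespace RQE

/-! ### Real-number helper lemmas -/

lemma rabs_zpow (a : ℝ) (n : ℤ) : |a ^ n| = |a| ^ n := by
  cases n with
  | ofNat m => simpa using abs_pow a m
  | negSucc m => simp [zpow_negSucc, abs_inv, abs_pow]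

lemma zpow_pos_inj {p q : ℝ} {c : ℤ} (hp : 0 < p) (hq : 0 < q) (hc : c ≠ 0)
    (h : p ^ c = q ^ c) : p = q := by
  have hc' : (c : ℝ) ≠ 0 := Int.cast_ne_zero.mpr hc
  calc p = (p ^ (c : ℝ)) ^ (c : ℝ)⁻¹ := by
        rw [← Real.rpow_mul hp.le, mul_inv_cancel₀ hc', Real.rpow_one]
    _ = (q ^ (c : ℝ)) ^ (c : ℝ)⁻¹ := by
        rw [Real.rpow_intCast, Real.rpow_intCast, h]
    _ = q := by rw [← Real.rpow_mul hq.le, mul_inv_cancel₀ hc', Real.rpow_one]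

lemma zpow_pos_surj {p : ℝ} {c : ℤ} (hp : 0 < p) (hc : c ≠ 0) :
    ∃ x : ℝ, 0 < x ∧ x ^ c = p := by
  have hc' : (c : ℝ) ≠ 0 := Int.cast_ne_zero.mpr hc
  refine ⟨p ^ (c : ℝ)⁻¹, Real.rpow_pos_of_pos hp _, ?_⟩
  rw [← Real.rpow_intCast (p ^ (c : ℝ)⁻¹) c, ← Real.rpow_mul hp.le,
    inv_mul_cancel₀ hc', Real.rpow_one]

lemma eq_of_mul_pos_of_abs_eq {p q : ℝ} (h : 0 < p * q) (habs : |p| = |q|) : p = q := by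
  rcases lt_trichotomy p 0 with hp | hp | hp
  · have hq : q < 0 := by
      rcases mul_pos_iff.mp h with ⟨h1, _⟩ | ⟨_, h2⟩
      · exact absurd h1 (by linarith)
      · exact h2
    have := habs
    rw [abs_of_neg hp, abs_of_neg hq] at this
    linarith
  · subst hp; simp at h
  · have hq : 0 < q := by
      rcases mul_pos_iff.mp h with ⟨_, h2⟩ | ⟨h1, _⟩
      · exact h2
      · exact absurd h1 (by linarith)
    rwa [abs_of_pos hp, abs_of_pos hq] at habs

lemma pos_mul_iff_left {d u : ℝ} (hd : 0 < d) : 0 < d * u ↔ 0 < u := by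
  constructor
  · intro h; nlinarith
  · intro h; exact mul_pos hd h

lemma zpow_shift {x u w : ℝ} {d₁ d₂ : ℤ} (hx : x ≠ 0) :
    x ^ d₁ * u = x ^ d₂ * w ↔ x ^ (d₁ - d₂) * u = w := by
  have h2 : x ^ d₂ ≠ 0 := zpow_ne_zero _ hx
  rw [← mul_right_inj' h2 (b := x ^ (d₁ - d₂) * u), ← mul_assoc, ← zpow_add₀ hx]
  have : d₂ + (d₁ - d₂) = d₁ := by ring
  rw [this]

/-- The key real-number equivalence used to evaluate a constraint at the unique
positive solution of `x ^ c * a = b`. -/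
lemma key_real {x : ℝ} {c c' : ℤ} {a b a' b' : ℝ} (hx : 0 < x) (hc : c ≠ 0)
    (ha : a ≠ 0) (hb : x ^ c * a = b) :
    ((a' = 0 ∧ b' = 0) ∨ (0 < a' * b' ∧ b ^ c' * a' ^ c = b' ^ c * a ^ c')) ↔
      x ^ c' * a' = b' := by
  have hx0 : x ≠ 0 := ne_of_gt hx
  constructor
  · rintro (⟨h1, h2⟩ | ⟨hpos, hid⟩)
    · subst h1; subst h2; simp
    · have ha' : a' ≠ 0 := by rintro rfl; simp at hpos
      have hb' : b' ≠ 0 := by rintro rfl; simp at hpos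
      have hid2 : x ^ (c * c') * a ^ c' * a' ^ c = b' ^ c * a ^ c' := by
        rw [← hb] at hid
        rw [mul_zpow, ← zpow_mul] at hid
        linarith [hid]
      have hid3 : x ^ (c * c') * a' ^ c = b' ^ c := by
        have hac : a ^ c' ≠ 0 := zpow_ne_zero _ ha
        field_simp at hid2
        have : (x ^ (c * c') * a' ^ c) * a ^ c' = b' ^ c * a ^ c' := by
          linear_combination a ^ c' * hid2
        exact mul_right_cancel₀ hac this
      have hpq : (x ^ c' * a') ^ c = b' ^ c := by
        rw [mul_zpow, ← zpow_mul]
        rw [mul_comm c' c]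
        exact hid3
      have hppos : x ^ c' * a' ≠ 0 := mul_ne_zero (zpow_ne_zero _ hx0) ha'
      have hprod : 0 < (x ^ c' * a') * b' := by
        have h1 : 0 < x ^ c' := zpow_pos hx _
        calc (0:ℝ) < x ^ c' * (a' * b') := mul_pos h1 hpos
          _ = (x ^ c' * a') * b' := by ring
      have habs : |x ^ c' * a'| = |b'| := by
        have h1 : |x ^ c' * a'| ^ c = |b'| ^ c := by
          rw [← rabs_zpow, ← rabs_zpow, hpq]
        exact zpow_pos_inj (abs_pos.mpr hppos) (abs_pos.mpr hb') hc h1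
      exact eq_of_mul_pos_of_abs_eq hprod habs
  · intro h
    by_cases ha' : a' = 0
    · left; exact ⟨ha', by rw [← h, ha', mul_zero]⟩
    · right
      have hb' : b' ≠ 0 := by rw [← h]; exact mul_ne_zero (zpow_ne_zero _ hx0) ha'
      constructor
      · have : a' * b' = x ^ c' * (a' * a') := by rw [← h]; ring
        rw [this]
        exact mul_pos (zpow_pos hx _) (mul_self_pos.mpr ha')
      · rw [← hb, ← h, mul_zpow, mul_zpow, ← zpow_mul, ← zpow_mul, mul_comm c' c]
        ring

/-! ### Signs -/

def sval (ε : ℤˣ) : ℝ := ((ε : ℤ) : ℝ)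

@[simp] lemma sval_one : sval 1 = 1 := by simp [sval]

@[simp] lemma sval_negOne : sval (-1) = -1 := by simp [sval]

def sHom : ℤˣ →* ℝ := (Int.castRingHom ℝ).toMonoidHom.comp (Units.coeHom ℤ)

lemma sval_eq_sHom (ε : ℤˣ) : sval ε = sHom ε := rfl

lemma sval_mul (ε₁ ε₂ : ℤˣ) : sval (ε₁ * ε₂) = sval ε₁ * sval ε₂ := by
  simp [sval]

lemma sval_ne_zero (ε : ℤˣ) : sval ε ≠ 0 := by
  rcases Int.units_eq_one_or ε with h | h <;> simp [h]

lemma sval_zpow (ε : ℤˣ) (c : ℤ) : sval (ε ^ c) = sval ε ^ c := by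
  rw [sval_eq_sHom, sval_eq_sHom, map_zpow]

/-! ### Monomials -/

variable {γ δ : Type*} {γ' : Type*}

/-- A (nonzero-able) monomial: a sign together with a list of (variable, exponent) pairs.
Its value at `e` is the sign times the product of the factors, where a factor with
exponent `z` at variable `b` has value `(e b) ^ z` if `e b ≠ 0` and `0` otherwise
(note that the factor is `0` at `e b = 0` even when `z = 0`). -/
abbrev Mono (γ : Type*) := ℤˣ × List (γ × ℤ)

/-- A monomial or the zero constant. -/
abbrev MonoZ (γ : Type*) := Option (Mono γ)

noncomputable def mfac (e : γ → ℝ) (p : γ × ℤ) : ℝ := if e p.1 = 0 then 0 else (e p.1) ^ p.2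

noncomputable def mEval (e : γ → ℝ) : MonoZ γ → ℝ
  | none => 0
  | some (ε, l) => sval ε * (l.map (mfac e)).prod

@[simp] lemma mEval_none (e : γ → ℝ) : mEval e (none : MonoZ γ) = 0 := rfl

def mzMul : MonoZ γ → MonoZ γ → MonoZ γ
  | some (ε₁, l₁), some (ε₂, l₂) => some (ε₁ * ε₂, l₁ ++ l₂)
  | _, _ => none

lemma mEval_mul (e : γ → ℝ) (m₁ m₂ : MonoZ γ) :
    mEval e (mzMul m₁ m₂) = mEval e m₁ * mEval e m₂ := by
  rcases m₁ with _ | ⟨ε₁, l₁⟩ <;> rcases m₂ with _ | ⟨ε₂, l₂⟩ <;>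
    simp [mzMul, mEval, sval_mul]
  ring

def mzPow (m : MonoZ γ) (c : ℤ) : MonoZ γ :=
  if c = 0 then some (1, []) else
    match m with
    | none => none
    | some (ε, l) => some (ε ^ c, l.map fun p => (p.1, p.2 * c))

lemma prod_map_zpow (l : List (γ × ℤ)) (g : γ × ℤ → ℝ) (c : ℤ) :
    (l.map fun p => g p ^ c).prod = (l.map g).prod ^ c := by
  induction l with
  | nil => simp
  | cons p l ih => simp [ih, mul_zpow]

lemma mEval_pow (e : γ → ℝ) (m : MonoZ γ) (c : ℤ) :
    mEval e (mzPow m c) = mEval e m ^ c := by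
  by_cases hc : c = 0
  · subst hc; simp [mzPow, mEval]
  · rcases m with _ | ⟨ε, l⟩
    · simp [mzPow, hc, zero_zpow c hc]
    · have h1 : mzPow (some (ε, l)) c = some (ε ^ c, l.map fun p => (p.1, p.2 * c)) := by
        simp [mzPow, hc]
      have h2 : (l.map fun p => (p.1, p.2 * c)).map (mfac e)
          = l.map fun p => mfac e p ^ c := by
        rw [List.map_map]
        apply List.map_congr_left
        intro p _
        simp only [Function.comp, mfac]
        by_cases h : e p.1 = 0
        · simp [h, zero_zpow c hc]
        · simp [h, zpow_mul]
      rw [h1]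
      show sval (ε ^ c) * ((l.map fun p => (p.1, p.2 * c)).map (mfac e)).prod = _
      rw [h2, prod_map_zpow, sval_zpow, mEval, mul_zpow]

def mzInv (m : MonoZ γ) : MonoZ γ := mzPow m (-1)

lemma mEval_inv (e : γ → ℝ) (m : MonoZ γ) : mEval e (mzInv m) = (mEval e m)⁻¹ := by
  rw [mzInv, mEval_pow, zpow_neg_one]

/-! ### Terms and normalization -/

def tZero : LmulPos.Term γ := Term.func RealMulFunc.zero ![]
def tOne : LmulPos.Term γ := Term.func RealMulFunc.one ![]
def tNegOne : LmulPos.Term γ := Term.func RealMulFunc.negOne ![]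
def tInv (t : LmulPos.Term γ) : LmulPos.Term γ := Term.func RealMulFunc.inv ![t]
def tMul (t₁ t₂ : LmulPos.Term γ) : LmulPos.Term γ := Term.func RealMulFunc.mul ![t₁, t₂]

@[simp] lemma realize_tZero (e : γ → ℝ) : (tZero : LmulPos.Term γ).realize e = 0 := rfl
@[simp] lemma realize_tOne (e : γ → ℝ) : (tOne : LmulPos.Term γ).realize e = 1 := rfl
@[simp] lemma realize_tNegOne (e : γ → ℝ) : (tNegOne : LmulPos.Term γ).realize e = -1 := rfl
@[simp] lemma realize_tInv (e : γ → ℝ) (t : LmulPos.Term γ) :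
    (tInv t).realize e = (t.realize e)⁻¹ := rfl
@[simp] lemma realize_tMul (e : γ → ℝ) (t₁ t₂ : LmulPos.Term γ) :
    (tMul t₁ t₂).realize e = t₁.realize e * t₂.realize e := rfl

def norm : LmulPos.Term γ → MonoZ γ
  | .var b => some (1, [(b, 1)])
  | .func RealMulFunc.zero _ => none
  | .func RealMulFunc.one _ => some (1, [])
  | .func RealMulFunc.negOne _ => some (-1, [])
  | .func RealMulFunc.inv ts => mzInv (norm (ts 0))
  | .func RealMulFunc.mul ts => mzMul (norm (ts 0)) (norm (ts 1))

lemma norm_realize (e : γ → ℝ) : ∀ t : LmulPos.Term γ, mEval e (norm t) = t.realize e := by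
  intro t
  induction t with
  | var b =>
    by_cases h : e b = 0 <;> simp [norm, mEval, mfac, h]
  | func f ts ih =>
    cases f with
    | zero => simp [norm, Term.realize]; rfl
    | one => simp [norm, mEval, Term.realize]; rfl
    | negOne => simp [norm, mEval, Term.realize]; rfl
    | inv =>
      have : Term.realize e (Term.func RealMulFunc.inv ts) = (Term.realize e (ts 0))⁻¹ := rfl
      rw [this, norm, mEval_inv, ih 0]
    | mul =>
      have : Term.realize e (Term.func RealMulFunc.mul ts)
          = Term.realize e (ts 0) * Term.realize e (ts 1) := rfl
      rw [this, norm, mEval_mul, ih 0, ih 1]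

/-! ### Terms from monomials -/

def tpowNat (t : LmulPos.Term γ) : ℕ → LmulPos.Term γ
  | 0 => tOne
  | n + 1 => tMul t (tpowNat t n)

lemma realize_tpowNat (e : γ → ℝ) (t : LmulPos.Term γ) (n : ℕ) :
    (tpowNat t n).realize e = t.realize e ^ n := by
  induction n with
  | zero => simp [tpowNat]
  | succ n ih => simp [tpowNat, ih, pow_succ]; ring

def entryTerm (p : γ × ℤ) : LmulPos.Term γ :=
  match p.2 with
  | Int.ofNat 0 => tMul (Term.var p.1) (tInv (Term.var p.1))
  | Int.ofNat (n + 1) => tpowNat (Term.var p.1) (n + 1)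
  | Int.negSucc n => tpowNat (tInv (Term.var p.1)) (n + 1)

lemma realize_entryTerm (e : γ → ℝ) (p : γ × ℤ) :
    (entryTerm p).realize e = mfac e p := by
  rcases p with ⟨b, z⟩
  by_cases h : e b = 0
  · cases z with
    | ofNat n =>
      cases n with
      | zero => simp [entryTerm, mfac, h]
      | succ n => simp [entryTerm, mfac, h, realize_tpowNat, zero_pow]
    | negSucc n => simp [entryTerm, mfac, h, realize_tpowNat, zero_pow]
  · cases z with
    | ofNat n =>
      cases n with
      | zero => simp [entryTerm, mfac, h, mul_inv_cancel₀ h]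
      | succ n =>
        simp [entryTerm, mfac, h, realize_tpowNat]
        norm_cast
    | negSucc n =>
      simp [entryTerm, mfac, h, realize_tpowNat, zpow_negSucc, inv_pow]

def ofMZ : MonoZ γ → LmulPos.Term γ
  | none => tZero
  | some (ε, l) => l.foldr (fun p acc => tMul (entryTerm p) acc)
      (if (ε : ℤ) = 1 then tOne else tNegOne)

lemma realize_ofMZ (e : γ → ℝ) (m : MonoZ γ) : (ofMZ m).realize e = mEval e m := by
  rcases m with _ | ⟨ε, l⟩
  · simp [ofMZ]
  · induction l with
    | nil =>
      rcases Int.units_eq_one_or ε with h | h <;> subst h <;>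
        simp [ofMZ, mEval]
    | cons p l ih =>
      simp only [ofMZ, List.foldr_cons] at ih ⊢
      rw [realize_tMul, ih, realize_entryTerm]
      simp [mEval]
      ring

/-! ### Atoms, literals, clauses, DNF -/

inductive NAtom (γ : Type*)
  | eq : MonoZ γ → MonoZ γ → NAtom γ
  | pos : MonoZ γ → NAtom γ

def aHolds (e : γ → ℝ) : NAtom γ → Prop
  | .eq m₁ m₂ => mEval e m₁ = mEval e m₂
  | .pos m => 0 < mEval e m

abbrev Lit (γ : Type*) := NAtom γ × Bool

def lHolds (e : γ → ℝ) (p : Lit γ) : Prop :=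
  if p.2 then aHolds e p.1 else ¬ aHolds e p.1

abbrev Clause (γ : Type*) := List (Lit γ)
abbrev DNF (γ : Type*) := List (Clause γ)

def cHolds (e : γ → ℝ) (c : Clause γ) : Prop := ∀ p ∈ c, lHolds e p

def dHolds (e : γ → ℝ) (D : DNF γ) : Prop := ∃ c ∈ D, cHolds e c

lemma dHolds_nil (e : γ → ℝ) : ¬ dHolds e ([] : DNF γ) := by
  rintro ⟨c, hc, -⟩; simp at hc

lemma dHolds_cons (e : γ → ℝ) (c : Clause γ) (D : DNF γ) :
    dHolds e (c :: D) ↔ cHolds e c ∨ dHolds e D := by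
  constructor
  · rintro ⟨c', hc', hold⟩
    rcases List.mem_cons.mp hc' with rfl | h
    · exact Or.inl hold
    · exact Or.inr ⟨c', h, hold⟩
  · rintro (h | ⟨c', hc', hold⟩)
    · exact ⟨c, List.mem_cons_self, h⟩
    · exact ⟨c', List.mem_cons_of_mem _ hc', hold⟩

def dOr (D₁ D₂ : DNF γ) : DNF γ := D₁ ++ D₂

lemma dHolds_or (e : γ → ℝ) (D₁ D₂ : DNF γ) :
    dHolds e (dOr D₁ D₂) ↔ dHolds e D₁ ∨ dHolds e D₂ := by
  induction D₁ with
  | nil =>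
    simp only [dOr, List.nil_append]
    exact (or_iff_right (dHolds_nil e)).symm
  | cons c D ih =>
    simp only [dOr, List.cons_append] at ih ⊢
    rw [dHolds_cons, ih, dHolds_cons, or_assoc]

def dAnd (D₁ D₂ : DNF γ) : DNF γ := D₁.flatMap fun c₁ => D₂.map fun c₂ => c₁ ++ c₂

lemma cHolds_append (e : γ → ℝ) (c₁ c₂ : Clause γ) :
    cHolds e (c₁ ++ c₂) ↔ cHolds e c₁ ∧ cHolds e c₂ := by
  constructor
  · intro h
    exact ⟨fun p hp => h p (List.mem_append_left _ hp),
      fun p hp => h p (List.mem_append_right _ hp)⟩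
  · rintro ⟨h₁, h₂⟩ p hp
    rcases List.mem_append.mp hp with h | h
    · exact h₁ p h
    · exact h₂ p h

lemma dHolds_and (e : γ → ℝ) (D₁ D₂ : DNF γ) :
    dHolds e (dAnd D₁ D₂) ↔ dHolds e D₁ ∧ dHolds e D₂ := by
  constructor
  · rintro ⟨c, hc, hold⟩
    simp only [dAnd, List.mem_flatMap, List.mem_map] at hc
    obtain ⟨c₁, h₁, c₂, h₂, rfl⟩ := hc
    rw [cHolds_append] at hold
    exact ⟨⟨c₁, h₁, hold.1⟩, ⟨c₂, h₂, hold.2⟩⟩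
  · rintro ⟨⟨c₁, h₁, hold₁⟩, ⟨c₂, h₂, hold₂⟩⟩
    refine ⟨c₁ ++ c₂, ?_, (cHolds_append e c₁ c₂).mpr ⟨hold₁, hold₂⟩⟩
    simp only [dAnd, List.mem_flatMap, List.mem_map]
    exact ⟨c₁, h₁, c₂, h₂, rfl⟩

def dTrue : DNF γ := [([] : Clause γ)]
def dFalse : DNF γ := ([] : DNF γ)

@[simp] lemma dHolds_true (e : γ → ℝ) : dHolds e (dTrue : DNF γ) := by
  refine ⟨[], by simp [dTrue], ?_⟩
  intro p hp; simp at hp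

@[simp] lemma dHolds_false (e : γ → ℝ) : ¬ dHolds e (dFalse : DNF γ) :=
  dHolds_nil e

def dNot : DNF γ → DNF γ
  | [] => dTrue
  | c :: D => dAnd (c.map fun p => [(p.1, !p.2)]) (dNot D)

lemma lHolds_neg (e : γ → ℝ) (p : Lit γ) : lHolds e (p.1, !p.2) ↔ ¬ lHolds e p := by
  rcases p with ⟨a, b⟩
  cases b <;> simp [lHolds]

lemma dHolds_not (e : γ → ℝ) (D : DNF γ) : dHolds e (dNot D) ↔ ¬ dHolds e D := by
  induction D with
  | nil =>
    rw [show dNot ([] : DNF γ) = dTrue from rfl]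
    simp only [dHolds_true, true_iff]
    exact dHolds_nil e
  | cons c D ih =>
    rw [show dNot (c :: D) = dAnd (c.map fun p => [(p.1, !p.2)]) (dNot D) from rfl]
    rw [dHolds_and, ih, dHolds_cons]
    have h1 : dHolds e (c.map fun p => [(p.1, !p.2)]) ↔ ¬ cHolds e c := by
      constructor
      · rintro ⟨c', hc', hold⟩
        rcases List.mem_map.mp hc' with ⟨p, hp, rfl⟩
        intro hall
        have := hold (p.1, !p.2) (List.mem_singleton_self _)
        rw [lHolds_neg] at this
        exact this (hall p hp)
      · intro h
        rcases not_forall.mp h with ⟨p, hp⟩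
        rw [Classical.not_imp] at hp
        refine ⟨[(p.1, !p.2)], List.mem_map.mpr ⟨p, hp.1, rfl⟩, ?_⟩
        intro q hq
        rw [List.mem_singleton] at hq
        subst hq
        rw [lHolds_neg]
        exact hp.2
    rw [h1]
    tauto

def dAll {ι : Type*} (F : ι → DNF γ) (l : List ι) : DNF γ :=
  l.foldr (fun t acc => dAnd (F t) acc) dTrue

lemma dHolds_all {ι : Type*} (e : γ → ℝ) (F : ι → DNF γ) (l : List ι) :
    dHolds e (dAll F l) ↔ ∀ t ∈ l, dHolds e (F t) := by
  induction l with
  | nil => simp [dAll]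
  | cons t l ih =>
    rw [show dAll F (t :: l) = dAnd (F t) (dAll F l) from rfl, dHolds_and, ih]
    simp

/-! ### Maps of variables -/

def mzMap (f : γ → γ') : MonoZ γ → MonoZ γ' :=
  Option.map fun m => (m.1, m.2.map fun p => (f p.1, p.2))

lemma mEval_map (f : γ → γ') (e : γ' → ℝ) (m : MonoZ γ) :
    mEval e (mzMap f m) = mEval (e ∘ f) m := by
  rcases m with _ | ⟨ε, l⟩
  · rfl
  · simp only [mzMap, Option.map, mEval]
    congr 1
    rw [List.map_map]
    congr 1

def aMap (f : γ → γ') : NAtom γ → NAtom γ'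
  | .eq m₁ m₂ => .eq (mzMap f m₁) (mzMap f m₂)
  | .pos m => .pos (mzMap f m)

lemma aHolds_map (f : γ → γ') (e : γ' → ℝ) (a : NAtom γ) :
    aHolds e (aMap f a) ↔ aHolds (e ∘ f) a := by
  cases a <;> simp [aMap, aHolds, mEval_map]

def cMapA (g : NAtom γ → NAtom γ') (c : Clause γ) : Clause γ' :=
  c.map fun p => (g p.1, p.2)

def dMapA (g : NAtom γ → NAtom γ') (D : DNF γ) : DNF γ' := D.map (cMapA g)

lemma cHolds_mapA {g : NAtom γ → NAtom γ'} {e : γ' → ℝ} {e' : γ → ℝ}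
    (hg : ∀ a, aHolds e (g a) ↔ aHolds e' a) (c : Clause γ) :
    cHolds e (cMapA g c) ↔ cHolds e' c := by
  simp only [cHolds, cMapA, List.mem_map]
  constructor
  · intro h p hp
    have := h (g p.1, p.2) ⟨p, hp, rfl⟩
    rcases p with ⟨a, b⟩
    cases b <;> simp only [lHolds, hg] at this ⊢ <;> exact this
  · rintro h q ⟨p, hp, rfl⟩
    have := h p hp
    rcases p with ⟨a, b⟩
    cases b <;> simp only [lHolds, hg] at this ⊢ <;> exact this

lemma dHolds_mapA {g : NAtom γ → NAtom γ'} {e : γ' → ℝ} {e' : γ → ℝ}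
    (hg : ∀ a, aHolds e (g a) ↔ aHolds e' a) (D : DNF γ) :
    dHolds e (dMapA g D) ↔ dHolds e' D := by
  simp only [dHolds, dMapA, List.mem_map]
  constructor
  · rintro ⟨c', ⟨c, hc, rfl⟩, hold⟩
    exact ⟨c, hc, (cHolds_mapA hg c).mp hold⟩
  · rintro ⟨c, hc, hold⟩
    exact ⟨cMapA g c, ⟨c, hc, rfl⟩, (cHolds_mapA hg c).mpr hold⟩

/-! ### Operations on monomials over `δ ⊕ Unit` -/

variable {δ : Type*}

/-- Extend an environment by a value for the distinguished variable. -/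
def ext (e : δ → ℝ) (x : ℝ) : δ ⊕ Unit → ℝ := Sum.elim e fun _ => x

def stripL : (δ ⊕ Unit) × ℤ → Option (δ × ℤ)
  | (.inl a, z) => some (a, z)
  | (.inr _, _) => none

def isR : (δ ⊕ Unit) × ℤ → Bool := fun p => p.1.isRight

/-- The total exponent of the distinguished variable. -/
def dsum (l : List ((δ ⊕ Unit) × ℤ)) : ℤ :=
  (l.filterMap fun p => if p.1.isRight then some p.2 else none).sum

/-- Substituting `0` for the distinguished variable. -/
def mz0 : MonoZ (δ ⊕ Unit) → MonoZ δ
  | none => none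
  | some (ε, l) => if l.any isR then none else some (ε, l.filterMap stripL)

/-- Substituting `-x` for `x` in the distinguished variable. -/
def mzNeg : MonoZ (δ ⊕ Unit) → MonoZ (δ ⊕ Unit)
  | none => none
  | some (ε, l) => some (ε * (-1) ^ dsum l, l)

/-- Splitting off the distinguished variable (valid when its value is nonzero). -/
def mzSplit : MonoZ (δ ⊕ Unit) → ℤ × MonoZ δ
  | none => (0, none)
  | some (ε, l) => (dsum l, some (ε, l.filterMap stripL))

lemma mEval_mz0 (e : δ → ℝ) (m : MonoZ (δ ⊕ Unit)) :
    mEval (ext e 0) m = mEval e (mz0 m) := by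
  rcases m with _ | ⟨ε, l⟩
  · rfl
  · by_cases h : l.any isR
    · rcases List.any_eq_true.mp h with ⟨p, hp, hR⟩
      rcases p with ⟨b, z⟩
      rcases b with a | u
      · simp [isR] at hR
      · have hfac : mfac (ext e 0) (Sum.inr u, z) = 0 := by
          simp [mfac, ext]
        rw [show mz0 (some (ε, l)) = none from by simp [mz0, h] ]
        simp only [mEval]
        rw [List.prod_eq_zero (List.mem_map.mpr ⟨_, hp, hfac⟩)]
        simp
    · rw [show mz0 (some (ε, l)) = some (ε, l.filterMap stripL) from by simp [mz0, h] ]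
      simp only [mEval]
      congr 1
      have h' : ∀ p ∈ l, ¬ isR p = true := by
        intro p hp
        intro hR
        exact h (List.any_eq_true.mpr ⟨p, hp, hR⟩)
      clear h
      induction l with
      | nil => simp
      | cons p l ih =>
        have hp : ¬ isR p = true := h' p (List.mem_cons_self)
        have hl : ∀ q ∈ l, ¬ isR q = true := fun q hq => h' q (List.mem_cons_of_mem _ hq)
        rcases p with ⟨b, z⟩
        rcases b with a | u
        · rw [List.filterMap_cons]
          simp only [stripL]
          rw [List.map_cons, List.map_cons, List.prod_cons, List.prod_cons, ih hl]
          have : mfac (ext e 0) (Sum.inl a, z) = mfac e (a, z) := by simp [mfac, ext]; rfl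
          rw [this]
        · simp [isR] at hp
  
lemma prod_split (e : δ → ℝ) (x : ℝ) (hx : x ≠ 0) (l : List ((δ ⊕ Unit) × ℤ)) :
    (l.map (mfac (ext e x))).prod
      = x ^ dsum l * ((l.filterMap stripL).map (mfac e)).prod := by
  induction l with
  | nil => simp [dsum]
  | cons p l ih =>
    rcases p with ⟨b, z⟩
    rcases b with a | u
    · have h1 : dsum ((Sum.inl a, z) :: l) = dsum l := by simp [dsum]
      have h2 : mfac (ext e x) (Sum.inl a, z) = mfac e (a, z) := by simp [mfac, ext]; rfl
      rw [List.map_cons, List.prod_cons, ih, h1]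
      rw [show List.filterMap stripL ((Sum.inl a, z) :: l)
        = (a, z) :: List.filterMap stripL l from by simp [List.filterMap_cons, stripL] ]
      rw [List.map_cons, List.prod_cons, h2]
      ring
    · have h1 : dsum ((Sum.inr u, z) :: l) = z + dsum l := by simp [dsum]
      have h2 : mfac (ext e x) (Sum.inr u, z) = x ^ z := by simp [mfac, ext, hx]
      rw [List.map_cons, List.prod_cons, ih, h1]
      rw [show List.filterMap stripL ((Sum.inr u, z) :: l)
        = List.filterMap stripL l from by simp [List.filterMap_cons, stripL] ]
      rw [h2, zpow_add₀ hx]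
      ring

lemma mEval_split (e : δ → ℝ) (x : ℝ) (hx : x ≠ 0) (m : MonoZ (δ ⊕ Unit)) :
    mEval (ext e x) m = x ^ (mzSplit m).1 * mEval e (mzSplit m).2 := by
  rcases m with _ | ⟨ε, l⟩
  · simp [mzSplit]
  · rw [show mzSplit (some (ε, l)) = (dsum l, some (ε, l.filterMap stripL)) from rfl]
    simp only [mEval]
    rw [prod_split e x hx l]
    ring

lemma mEval_mzNeg (e : δ → ℝ) (x : ℝ) (m : MonoZ (δ ⊕ Unit)) :
    mEval (ext e (-x)) m = mEval (ext e x) (mzNeg m) := by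
  rcases m with _ | ⟨ε, l⟩
  · rfl
  · rw [show mzNeg (some (ε, l)) = some (ε * (-1) ^ dsum l, l) from rfl]
    simp only [mEval, sval_mul, sval_zpow, sval_negOne]
    have : (l.map (mfac (ext e (-x)))).prod
        = (-1 : ℝ) ^ dsum l * (l.map (mfac (ext e x))).prod := by
      induction l with
      | nil => simp [dsum]
      | cons p l ih =>
        rcases p with ⟨b, z⟩
        rcases b with a | u
        · have h1 : dsum ((Sum.inl a, z) :: l) = dsum l := by simp [dsum]
          have h2 : mfac (ext e (-x)) (Sum.inl a, z) = mfac (ext e x) (Sum.inl a, z) := by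
            simp [mfac, ext]
            rfl
          rw [List.map_cons, List.prod_cons, List.map_cons, List.prod_cons, ih, h1, h2]
          ring
        · have h1 : dsum ((Sum.inr u, z) :: l) = z + dsum l := by simp [dsum]
          have h2 : mfac (ext e (-x)) (Sum.inr u, z)
              = (-1 : ℝ) ^ z * mfac (ext e x) (Sum.inr u, z) := by
            by_cases hx : x = 0
            · simp [mfac, ext, hx]
            · have hnx : -x ≠ 0 := neg_ne_zero.mpr hx
              simp only [mfac, ext, Sum.elim_inr, if_neg hnx, if_neg hx]
              rw [show (-x) = (-1 : ℝ) * x from by ring, mul_zpow]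
              simp [hx]
          rw [List.map_cons, List.prod_cons, List.map_cons, List.prod_cons, ih, h1, h2,
            zpow_add₀ (by norm_num : (-1 : ℝ) ≠ 0)]
          ring
    rw [this]
    ring

/-! ### Constraints and elimination of a positive variable -/

/-- A constraint `x ^ c * A = B`. -/
abbrev Constr (δ : Type*) := ℤ × MonoZ δ × MonoZ δ

def CH (e : δ → ℝ) (x : ℝ) (t : Constr δ) : Prop :=
  x ^ t.1 * mEval e t.2.1 = mEval e t.2.2

def dEq (A B : MonoZ δ) : DNF δ := [ [(NAtom.eq A B, true)] ]
def dEqZ (A : MonoZ δ) : DNF δ := dEq A none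
def dPos (A : MonoZ δ) : DNF δ := [ [(NAtom.pos A, true)] ]

lemma dHolds_single (e : γ → ℝ) (a : NAtom γ) :
    dHolds e [ [ (a, true) ] ] ↔ aHolds e a := by
  constructor
  · rintro ⟨c, hc, hold⟩
    have hc' : c = [(a, true)] := by simpa using hc
    subst hc'
    have := hold (a, true) (by simp)
    simpa [lHolds] using this
  · intro h
    refine ⟨[(a, true)], by simp, ?_⟩
    intro p hp
    have hp' : p = (a, true) := by simpa using hp
    subst hp'
    simpa [lHolds] using h

lemma dHolds_dEq (e : δ → ℝ) (A B : MonoZ δ) :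
    dHolds e (dEq A B) ↔ mEval e A = mEval e B := by
  rw [dEq, dHolds_single]
  rfl

lemma dHolds_dEqZ (e : δ → ℝ) (A : MonoZ δ) :
    dHolds e (dEqZ A) ↔ mEval e A = 0 := by
  rw [dEqZ, dHolds_dEq, mEval_none]

lemma dHolds_dPos (e : δ → ℝ) (A : MonoZ δ) :
    dHolds e (dPos A) ↔ 0 < mEval e A := by
  rw [dPos, dHolds_single]
  rfl

/-- The condition expressing that constraint `t` holds at the unique positive `x`
with `x ^ c * A = B` (given `A ≠ 0`, `0 < A * B`). -/
def atD (c : ℤ) (A B : MonoZ δ) (t : Constr δ) : DNF δ :=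
  dOr (dAnd (dEqZ t.2.1) (dEqZ t.2.2))
    (dAnd (dPos (mzMul t.2.1 t.2.2))
      (dEq (mzMul (mzPow B t.1) (mzPow t.2.1 c)) (mzMul (mzPow t.2.2 c) (mzPow A t.1))))

lemma dHolds_atD (e : δ → ℝ) {x : ℝ} {c : ℤ} (hx : 0 < x) (hc : c ≠ 0)
    {A B : MonoZ δ} (hA : mEval e A ≠ 0) (hxc : x ^ c * mEval e A = mEval e B)
    (t : Constr δ) : dHolds e (atD c A B t) ↔ CH e x t := by
  rcases t with ⟨c', A', B'⟩
  rw [atD, dHolds_or, dHolds_and, dHolds_and, dHolds_dEqZ, dHolds_dEqZ, dHolds_dPos,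
    dHolds_dEq, mEval_mul, mEval_mul, mEval_mul, mEval_pow, mEval_pow, mEval_pow, mEval_pow]
  exact key_real hx hc hA hxc

/-- Quantifier elimination for `∃ x > 0` over a system of equations `eqs` and
disequations `dis`. -/
def solve : List (Constr δ) → List (Constr δ) → DNF δ
  | [], dis => dAll (fun t : Constr δ =>
      if t.1 = 0 then dNot (dEq t.2.1 t.2.2)
      else dNot (dAnd (dEqZ t.2.1) (dEqZ t.2.2))) dis
  | (c, A, B) :: eqs, dis =>
    if c = 0 then dAnd (dEq A B) (solve eqs dis)
    else
      dOr (dAnd (dEqZ A) (dAnd (dEqZ B) (solve eqs dis)))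
        (dAnd (dNot (dEqZ A)) (dAnd (dPos (mzMul A B))
          (dAnd (dAll (atD c A B) eqs) (dAll (fun t => dNot (atD c A B t)) dis))))

lemma bad_finite (e : δ → ℝ) (dis : List (Constr δ)) :
    {x : ℝ | 0 < x ∧ ∃ t ∈ dis, t.1 ≠ 0 ∧ mEval e t.2.1 ≠ 0 ∧ CH e x t}.Finite := by
  induction dis with
  | nil => simp
  | cons t dis ih =>
    have hsub : {x : ℝ | 0 < x ∧ ∃ s ∈ t :: dis, s.1 ≠ 0 ∧ mEval e s.2.1 ≠ 0 ∧ CH e x s}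
        ⊆ {x : ℝ | 0 < x ∧ t.1 ≠ 0 ∧ mEval e t.2.1 ≠ 0 ∧ CH e x t}
          ∪ {x : ℝ | 0 < x ∧ ∃ s ∈ dis, s.1 ≠ 0 ∧ mEval e s.2.1 ≠ 0 ∧ CH e x s} := by
      rintro x ⟨hx, s, hs, h⟩
      rcases List.mem_cons.mp hs with rfl | hs'
      · exact Or.inl ⟨hx, h⟩
      · exact Or.inr ⟨hx, s, hs', h⟩
    refine Set.Finite.subset (Set.Finite.union ?_ ih) hsub
    apply Set.Subsingleton.finite
    rintro x ⟨hx, hc, hA, hch⟩ y ⟨hy, -, -, hch'⟩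
    have : x ^ t.1 = y ^ t.1 := by
      have := hch.trans hch'.symm
      exact mul_right_cancel₀ hA this
    exact zpow_pos_inj hx hy hc this

lemma solve_correct (eqs dis : List (Constr δ)) (e : δ → ℝ) :
    dHolds e (solve eqs dis) ↔
      ∃ x : ℝ, 0 < x ∧ (∀ t ∈ eqs, CH e x t) ∧ (∀ t ∈ dis, ¬ CH e x t) := by
  induction eqs with
  | nil =>
    rw [show solve ([] : List (Constr δ)) dis = dAll (fun t : Constr δ =>
      if t.1 = 0 then dNot (dEq t.2.1 t.2.2)
      else dNot (dAnd (dEqZ t.2.1) (dEqZ t.2.2))) dis from rfl]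
    rw [dHolds_all]
    constructor
    · intro h
      set bad := {x : ℝ | 0 < x ∧ ∃ t ∈ dis, t.1 ≠ 0 ∧ mEval e t.2.1 ≠ 0 ∧ CH e x t}
      have hfin : bad.Finite := bad_finite e dis
      have hinf : (Set.Ioi (0 : ℝ)).Infinite := Set.Ioi_infinite 0
      obtain ⟨x, hx⟩ := (hinf.diff hfin).nonempty
      rcases hx with ⟨hx1, hx2⟩
      rw [Set.mem_Ioi] at hx1
      refine ⟨x, hx1, fun t ht => absurd ht (by simp), ?_⟩
      intro t ht hch
      have h1 := h t ht
      by_cases hc : t.1 = 0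
      · rw [if_pos hc, dHolds_not, dHolds_dEq] at h1
        apply h1
        rw [CH, hc, zpow_zero, one_mul] at hch
        exact hch
      · rw [if_neg hc, dHolds_not, dHolds_and, dHolds_dEqZ, dHolds_dEqZ] at h1
        by_cases hA : mEval e t.2.1 = 0
        · rw [CH, hA, mul_zero] at hch
          exact h1 ⟨hA, hch.symm⟩
        · exact hx2 ⟨hx1, t, ht, hc, hA, hch⟩
    · rintro ⟨x, hx, -, hdis⟩ t ht
      by_cases hc : t.1 = 0
      · rw [if_pos hc, dHolds_not, dHolds_dEq]
        intro heq
        apply hdis t ht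
        rw [CH, hc, zpow_zero, one_mul]
        exact heq
      · rw [if_neg hc, dHolds_not, dHolds_and, dHolds_dEqZ, dHolds_dEqZ]
        rintro ⟨hA, hB⟩
        apply hdis t ht
        rw [CH, hA, hB, mul_zero]
  | cons t eqs ih =>
    rcases t with ⟨c, A, B⟩
    by_cases hc : c = 0
    · subst hc
      rw [show solve ((0, A, B) :: eqs) dis =
        dAnd (dEq A B) (solve eqs dis) from by rw [solve]; simp]
      rw [dHolds_and, dHolds_dEq, ih]
      constructor
      · rintro ⟨hAB, x, hx, heqs, hdis⟩
        refine ⟨x, hx, ?_, hdis⟩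
        intro s hs
        rcases List.mem_cons.mp hs with rfl | hs'
        · rw [CH, zpow_zero, one_mul]; exact hAB
        · exact heqs s hs'
      · rintro ⟨x, hx, heqs, hdis⟩
        have h0 := heqs _ (List.mem_cons_self)
        rw [CH, zpow_zero, one_mul] at h0
        exact ⟨h0, x, hx, fun s hs => heqs s (List.mem_cons_of_mem _ hs), hdis⟩
    · rw [show solve ((c, A, B) :: eqs) dis =
        dOr (dAnd (dEqZ A) (dAnd (dEqZ B) (solve eqs dis)))
          (dAnd (dNot (dEqZ A)) (dAnd (dPos (mzMul A B))
            (dAnd (dAll (atD c A B) eqs) (dAll (fun t => dNot (atD c A B t)) dis))))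
        from by rw [solve]; simp [hc] ]
      simp only [dHolds_or, dHolds_and, dHolds_not, dHolds_dEqZ, dHolds_dPos,
        mEval_mul, dHolds_all, ih]
      constructor
      · rintro (⟨hA, hB, x, hx, heqs, hdis⟩ | ⟨hA, hAB, heqs, hdis⟩)
        · refine ⟨x, hx, ?_, hdis⟩
          intro s hs
          rcases List.mem_cons.mp hs with rfl | hs'
          · rw [CH, hA, hB, mul_zero]
          · exact heqs s hs'
        · have hApos : 0 < mEval e A * mEval e A := mul_self_pos.mpr hA
          have hBA : 0 < mEval e B / mEval e A := by
            rw [div_pos_iff]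
            rcases mul_pos_iff.mp hAB with ⟨h1, h2⟩ | ⟨h1, h2⟩
            · exact Or.inl ⟨h2, h1⟩
            · exact Or.inr ⟨h2, h1⟩
          obtain ⟨x, hx, hxc⟩ := zpow_pos_surj hBA hc
          have hxc' : x ^ c * mEval e A = mEval e B := by
            rw [hxc, div_mul_cancel₀ _ hA]
          refine ⟨x, hx, ?_, ?_⟩
          · intro s hs
            rcases List.mem_cons.mp hs with rfl | hs'
            · exact hxc'
            · exact (dHolds_atD e hx hc hA hxc' s).mp (heqs s hs')
          · intro s hs
            have := hdis s hs
            rw [dHolds_atD e hx hc hA hxc' s] at this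
            exact this
      · rintro ⟨x, hx, heqs, hdis⟩
        by_cases hA : mEval e A = 0
        · left
          have h0 := heqs _ (List.mem_cons_self)
          rw [CH, hA, mul_zero] at h0
          exact ⟨hA, h0.symm, x, hx, fun s hs => heqs s (List.mem_cons_of_mem _ hs), hdis⟩
        · right
          have hxc' : x ^ c * mEval e A = mEval e B :=
            heqs _ (List.mem_cons_self)
          have hAB : 0 < mEval e A * mEval e B := by
            rw [← hxc']
            have : mEval e A * (x ^ c * mEval e A) = x ^ c * (mEval e A * mEval e A) := by
              ring
            rw [this]
            exact mul_pos (zpow_pos hx _) (mul_self_pos.mpr hA)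
          refine ⟨hA, hAB, ?_, ?_⟩
          · intro s hs
            exact (dHolds_atD e hx hc hA hxc' s).mpr (heqs s (List.mem_cons_of_mem _ hs))
          · intro s hs
            rw [dHolds_atD e hx hc hA hxc' s]
            exact hdis s hs

/-! ### Eliminating `∃ x` from a clause -/

/-- Classify a literal over `δ ⊕ Unit` (for `x > 0`): a sign literal (free of `x`)
or a constraint with a polarity. -/
def splitLit (p : Lit (δ ⊕ Unit)) : (Lit δ) ⊕ (Constr δ × Bool) :=
  match p.1 with
  | .pos m => .inl ((NAtom.pos (mzSplit m).2, p.2))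
  | .eq m₁ m₂ => .inr (((mzSplit m₁).1 - (mzSplit m₂).1, (mzSplit m₁).2, (mzSplit m₂).2), p.2)

def signsOf (cl : Clause (δ ⊕ Unit)) : Clause δ :=
  cl.filterMap fun p => (splitLit p).getLeft?

def eqsOf (cl : Clause (δ ⊕ Unit)) : List (Constr δ) :=
  cl.filterMap fun p =>
    match splitLit p with
    | .inr (t, true) => some t
    | _ => none

def disOf (cl : Clause (δ ⊕ Unit)) : List (Constr δ) :=
  cl.filterMap fun p =>
    match splitLit p with
    | .inr (t, false) => some t
    | _ => none

lemma lit_pos_iff (e : δ → ℝ) {x : ℝ} (hx : 0 < x) (m : MonoZ (δ ⊕ Unit)) :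
    aHolds (ext e x) (NAtom.pos m) ↔ aHolds e (NAtom.pos (mzSplit m).2) := by
  show 0 < mEval (ext e x) m ↔ 0 < mEval e (mzSplit m).2
  rw [mEval_split e x (ne_of_gt hx) m]
  exact pos_mul_iff_left (zpow_pos hx _)

lemma lit_eq_iff (e : δ → ℝ) {x : ℝ} (hx : 0 < x) (m₁ m₂ : MonoZ (δ ⊕ Unit)) :
    aHolds (ext e x) (NAtom.eq m₁ m₂) ↔
      CH e x ((mzSplit m₁).1 - (mzSplit m₂).1, (mzSplit m₁).2, (mzSplit m₂).2) := by
  show mEval (ext e x) m₁ = mEval (ext e x) m₂ ↔ _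
  rw [mEval_split e x (ne_of_gt hx) m₁, mEval_split e x (ne_of_gt hx) m₂]
  exact zpow_shift (ne_of_gt hx)

lemma pos_decomp (e : δ → ℝ) {x : ℝ} (hx : 0 < x) (cl : Clause (δ ⊕ Unit)) :
    cHolds (ext e x) cl ↔
      (cHolds e (signsOf cl) ∧ (∀ t ∈ eqsOf cl, CH e x t) ∧ (∀ t ∈ disOf cl, ¬ CH e x t)) := by
  induction cl with
  | nil => simp [cHolds, signsOf, eqsOf, disOf]
  | cons p cl ih =>
    have hcons : ∀ (f : Lit (δ ⊕ Unit) → ℝ → Prop), True := fun _ => trivial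
    rcases p with ⟨a, b⟩
    have hmain : cHolds (ext e x) ((a, b) :: cl) ↔
        lHolds (ext e x) (a, b) ∧ cHolds (ext e x) cl := by
      constructor
      · intro h
        exact ⟨h _ (List.mem_cons_self), fun q hq => h q (List.mem_cons_of_mem _ hq)⟩
      · rintro ⟨h1, h2⟩ q hq
        rcases List.mem_cons.mp hq with rfl | hq'
        · exact h1
        · exact h2 q hq'
    rw [hmain, ih]
    cases a with
    | eq m₁ m₂ =>
      cases b
      · -- negative equation literal: goes to disOf
        rw [show signsOf ((NAtom.eq m₁ m₂, false) :: cl) = signsOf cl from by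
          simp [signsOf, List.filterMap_cons, splitLit] ]
        rw [show eqsOf ((NAtom.eq m₁ m₂, false) :: cl) = eqsOf cl from by
          simp [eqsOf, List.filterMap_cons, splitLit] ]
        rw [show disOf ((NAtom.eq m₁ m₂, false) :: cl)
            = ((mzSplit m₁).1 - (mzSplit m₂).1, (mzSplit m₁).2, (mzSplit m₂).2) :: disOf cl
          from by simp [disOf, List.filterMap_cons, splitLit] ]
        have : lHolds (ext e x) (NAtom.eq m₁ m₂, false) ↔
            ¬ CH e x ((mzSplit m₁).1 - (mzSplit m₂).1, (mzSplit m₁).2, (mzSplit m₂).2) := by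
          rw [lHolds]
          simp only [if_neg (by simp : ¬ false = true)]
          exact not_congr (lit_eq_iff e hx m₁ m₂)
        rw [this]
        constructor
        · rintro ⟨h1, h2, h3, h4⟩
          refine ⟨h2, h3, ?_⟩
          intro t ht
          rcases List.mem_cons.mp ht with rfl | ht'
          · exact h1
          · exact h4 t ht'
        · rintro ⟨h2, h3, h4⟩
          exact ⟨h4 _ (List.mem_cons_self), h2, h3,
            fun t ht => h4 t (List.mem_cons_of_mem _ ht)⟩
      · -- positive equation literal: goes to eqsOf
        rw [show signsOf ((NAtom.eq m₁ m₂, true) :: cl) = signsOf cl from by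
          simp [signsOf, List.filterMap_cons, splitLit] ]
        rw [show eqsOf ((NAtom.eq m₁ m₂, true) :: cl)
            = ((mzSplit m₁).1 - (mzSplit m₂).1, (mzSplit m₁).2, (mzSplit m₂).2) :: eqsOf cl
          from by simp [eqsOf, List.filterMap_cons, splitLit] ]
        rw [show disOf ((NAtom.eq m₁ m₂, true) :: cl) = disOf cl from by
          simp [disOf, List.filterMap_cons, splitLit] ]
        have : lHolds (ext e x) (NAtom.eq m₁ m₂, true) ↔
            CH e x ((mzSplit m₁).1 - (mzSplit m₂).1, (mzSplit m₁).2, (mzSplit m₂).2) := by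
          rw [lHolds]
          simp only [if_pos rfl]
          exact lit_eq_iff e hx m₁ m₂
        rw [this]
        constructor
        · rintro ⟨h1, h2, h3, h4⟩
          refine ⟨h2, ?_, h4⟩
          intro t ht
          rcases List.mem_cons.mp ht with rfl | ht'
          · exact h1
          · exact h3 t ht'
        · rintro ⟨h2, h3, h4⟩
          exact ⟨h3 _ (List.mem_cons_self), h2,
            fun t ht => h3 t (List.mem_cons_of_mem _ ht), h4⟩
    | pos m =>
      rw [show signsOf ((NAtom.pos m, b) :: cl)
          = (NAtom.pos (mzSplit m).2, b) :: signsOf cl from by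
        simp [signsOf, List.filterMap_cons, splitLit] ]
      rw [show eqsOf ((NAtom.pos m, b) :: cl) = eqsOf cl from by
        simp [eqsOf, List.filterMap_cons, splitLit] ]
      rw [show disOf ((NAtom.pos m, b) :: cl) = disOf cl from by
        simp [disOf, List.filterMap_cons, splitLit] ]
      have hsign : lHolds (ext e x) (NAtom.pos m, b) ↔
          lHolds e (NAtom.pos (mzSplit m).2, b) := by
        cases b <;> simp [lHolds, lit_pos_iff e hx m]
      rw [hsign]
      have hmain2 : cHolds e ((NAtom.pos (mzSplit m).2, b) :: signsOf cl) ↔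
          lHolds e (NAtom.pos (mzSplit m).2, b) ∧ cHolds e (signsOf cl) := by
        constructor
        · intro h
          exact ⟨h _ (List.mem_cons_self), fun q hq => h q (List.mem_cons_of_mem _ hq)⟩
        · rintro ⟨h1, h2⟩ q hq
          rcases List.mem_cons.mp hq with rfl | hq'
          · exact h1
          · exact h2 q hq'
      rw [hmain2]
      tauto

/-- The DNF expressing `∃ x > 0` applied to a clause. -/
def posEx (cl : Clause (δ ⊕ Unit)) : DNF δ :=
  dAnd [signsOf cl] (solve (eqsOf cl) (disOf cl))

lemma posEx_correct (e : δ → ℝ) (cl : Clause (δ ⊕ Unit)) :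
    dHolds e (posEx cl) ↔ ∃ x : ℝ, 0 < x ∧ cHolds (ext e x) cl := by
  rw [posEx, dHolds_and, solve_correct]
  have h1 : dHolds e [signsOf cl] ↔ cHolds e (signsOf cl) := by
    rw [show [signsOf cl] = signsOf cl :: ([] : DNF δ) from rfl, dHolds_cons]
    constructor
    · rintro (h | h)
      · exact h
      · exact absurd h (dHolds_nil e)
    · exact Or.inl
  rw [h1]
  constructor
  · rintro ⟨hs, x, hx, he, hd⟩
    exact ⟨x, hx, (pos_decomp e hx cl).mpr ⟨hs, he, hd⟩⟩
  · rintro ⟨x, hx, h⟩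
    have := (pos_decomp e hx cl).mp h
    exact ⟨this.1, x, hx, this.2.1, this.2.2⟩

def aMap0 : NAtom (δ ⊕ Unit) → NAtom δ
  | .eq m₁ m₂ => .eq (mz0 m₁) (mz0 m₂)
  | .pos m => .pos (mz0 m)

def aMapNeg : NAtom (δ ⊕ Unit) → NAtom (δ ⊕ Unit)
  | .eq m₁ m₂ => .eq (mzNeg m₁) (mzNeg m₂)
  | .pos m => .pos (mzNeg m)

lemma aHolds_aMap0 (e : δ → ℝ) (a : NAtom (δ ⊕ Unit)) :
    aHolds e (aMap0 a) ↔ aHolds (ext e 0) a := by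
  cases a <;> simp [aMap0, aHolds, mEval_mz0]

lemma aHolds_aMapNeg (e : δ → ℝ) (x : ℝ) (a : NAtom (δ ⊕ Unit)) :
    aHolds (ext e x) (aMapNeg a) ↔ aHolds (ext e (-x)) a := by
  cases a <;> simp [aMapNeg, aHolds, mEval_mzNeg]

/-- The DNF expressing `∃ x` applied to a clause: `x = 0`, `x > 0` or `x < 0`. -/
def elimClause (cl : Clause (δ ⊕ Unit)) : DNF δ :=
  dOr [cMapA aMap0 cl] (dOr (posEx cl) (posEx (cMapA aMapNeg cl)))

lemma dHolds_singleton_clause (e : δ → ℝ) (c : Clause δ) :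
    dHolds e [c] ↔ cHolds e c := by
  rw [show [c] = c :: ([] : DNF δ) from rfl, dHolds_cons]
  constructor
  · rintro (h | h)
    · exact h
    · exact absurd h (dHolds_nil e)
  · exact Or.inl

lemma elimClause_correct (e : δ → ℝ) (cl : Clause (δ ⊕ Unit)) :
    dHolds e (elimClause cl) ↔ ∃ x : ℝ, cHolds (ext e x) cl := by
  rw [elimClause, dHolds_or, dHolds_or, posEx_correct, posEx_correct,
    dHolds_singleton_clause]
  rw [cHolds_mapA (fun a => aHolds_aMap0 e a) cl]
  have hneg : ∀ x : ℝ, cHolds (ext e x) (cMapA aMapNeg cl) ↔ cHolds (ext e (-x)) cl :=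
    fun x => cHolds_mapA (fun a => aHolds_aMapNeg e x a) cl
  constructor
  · rintro (h | ⟨x, hx, h⟩ | ⟨x, hx, h⟩)
    · exact ⟨0, h⟩
    · exact ⟨x, h⟩
    · exact ⟨-x, (hneg x).mp h⟩
  · rintro ⟨x, h⟩
    rcases lt_trichotomy x 0 with hx | hx | hx
    · right; right
      refine ⟨-x, by linarith, ?_⟩
      rw [hneg (-x), neg_neg]
      exact h
    · subst hx
      exact Or.inl h
    · exact Or.inr (Or.inl ⟨x, hx, h⟩)

/-- Eliminating `∃ x` from a DNF. -/
def elimDNF (D : DNF (δ ⊕ Unit)) : DNF δ := D.flatMap elimClause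

lemma elimDNF_correct (e : δ → ℝ) (D : DNF (δ ⊕ Unit)) :
    dHolds e (elimDNF D) ↔ ∃ x : ℝ, dHolds (ext e x) D := by
  constructor
  · rintro ⟨c, hc, hold⟩
    rw [elimDNF, List.mem_flatMap] at hc
    obtain ⟨cl, hcl, hc⟩ := hc
    have : dHolds e (elimClause cl) := ⟨c, hc, hold⟩
    obtain ⟨x, hx⟩ := (elimClause_correct e cl).mp this
    exact ⟨x, cl, hcl, hx⟩
  · rintro ⟨x, cl, hcl, hold⟩
    have : dHolds e (elimClause cl) := (elimClause_correct e cl).mpr ⟨x, hold⟩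
    obtain ⟨c, hc, hold'⟩ := this
    exact ⟨c, List.mem_flatMap.mpr ⟨cl, hcl, hc⟩, hold'⟩

/-! ### From DNFs to quantifier-free formulas -/

variable {β : Type*} {m : ℕ}

def aForm : NAtom (β ⊕ Fin m) → LmulPos.BoundedFormula β m
  | .eq m₁ m₂ => Term.bdEqual (ofMZ m₁) (ofMZ m₂)
  | .pos m => Relations.boundedFormula PosRel.pos ![ofMZ m]

lemma aForm_isQF (a : NAtom (β ⊕ Fin m)) : (aForm a).IsQF := by
  cases a with
  | eq m₁ m₂ => exact (BoundedFormula.IsAtomic.equal _ _).isQF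
  | pos m => exact (BoundedFormula.IsAtomic.rel _ _).isQF

lemma realize_aForm (v : β → ℝ) (xs : Fin m → ℝ) (a : NAtom (β ⊕ Fin m)) :
    (aForm a).Realize v xs ↔ aHolds (Sum.elim v xs) a := by
  cases a with
  | eq m₁ m₂ =>
    rw [aForm, BoundedFormula.realize_bdEqual, realize_ofMZ, realize_ofMZ]
    rfl
  | pos m =>
    rw [aForm]
    show (0 < Term.realize (Sum.elim v xs) (![ofMZ m] 0)) ↔ _
    rw [show (![ofMZ m] 0) = ofMZ m from rfl, realize_ofMZ]
    rfl

def lForm (p : Lit (β ⊕ Fin m)) : LmulPos.BoundedFormula β m :=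
  if p.2 then aForm p.1 else (aForm p.1).not

lemma lForm_isQF (p : Lit (β ⊕ Fin m)) : (lForm p).IsQF := by
  rcases p with ⟨a, b⟩
  cases b
  · exact (aForm_isQF a).not
  · exact aForm_isQF a

lemma realize_lForm (v : β → ℝ) (xs : Fin m → ℝ) (p : Lit (β ⊕ Fin m)) :
    (lForm p).Realize v xs ↔ lHolds (Sum.elim v xs) p := by
  rcases p with ⟨a, b⟩
  cases b <;>
    simp [lForm, lHolds, BoundedFormula.realize_not, realize_aForm]

def cForm (c : Clause (β ⊕ Fin m)) : LmulPos.BoundedFormula β m :=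
  (c.map lForm).foldr (· ⊓ ·) ⊤

lemma cForm_isQF (c : Clause (β ⊕ Fin m)) : (cForm c).IsQF := by
  induction c with
  | nil => exact BoundedFormula.IsQF.top
  | cons p c ih =>
    exact (lForm_isQF p).inf ih

lemma realize_cForm (v : β → ℝ) (xs : Fin m → ℝ) (c : Clause (β ⊕ Fin m)) :
    (cForm c).Realize v xs ↔ cHolds (Sum.elim v xs) c := by
  induction c with
  | nil =>
    simp [cForm, cHolds, BoundedFormula.realize_top]
  | cons p c ih =>
    rw [show cForm (p :: c) = lForm p ⊓ cForm c from rfl, BoundedFormula.realize_inf,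
      ih, realize_lForm]
    constructor
    · rintro ⟨h1, h2⟩ q hq
      rcases List.mem_cons.mp hq with rfl | hq'
      · exact h1
      · exact h2 q hq'
    · intro h
      exact ⟨h _ (List.mem_cons_self), fun q hq => h q (List.mem_cons_of_mem _ hq)⟩

def dForm (D : DNF (β ⊕ Fin m)) : LmulPos.BoundedFormula β m :=
  (D.map cForm).foldr (· ⊔ ·) ⊥

lemma dForm_isQF (D : DNF (β ⊕ Fin m)) : (dForm D).IsQF := by
  induction D with
  | nil => exact BoundedFormula.isQF_bot
  | cons c D ih => exact (cForm_isQF c).sup ih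

lemma realize_dForm (v : β → ℝ) (xs : Fin m → ℝ) (D : DNF (β ⊕ Fin m)) :
    (dForm D).Realize v xs ↔ dHolds (Sum.elim v xs) D := by
  induction D with
  | nil =>
    rw [show dForm ([] : DNF (β ⊕ Fin m)) = ⊥ from rfl]
    simp only [BoundedFormula.realize_bot, false_iff]
    exact dHolds_nil _
  | cons c D ih =>
    rw [show dForm (c :: D) = cForm c ⊔ dForm D from rfl, BoundedFormula.realize_sup,
      ih, realize_cForm, dHolds_cons]

/-! ### From quantifier-free formulas to DNFs -/

lemma qf_toDNF {φ : LmulPos.BoundedFormula β m} (h : φ.IsQF) :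
    ∃ D : DNF (β ⊕ Fin m), ∀ (v : β → ℝ) (xs : Fin m → ℝ),
      φ.Realize v xs ↔ dHolds (Sum.elim v xs) D := by
  induction h with
  | falsum =>
    refine ⟨dFalse, fun v xs => ?_⟩
    rw [show (BoundedFormula.falsum : LmulPos.BoundedFormula β m) = ⊥ from rfl]
    simp only [BoundedFormula.realize_bot, false_iff]
    exact dHolds_false _
  | of_isAtomic h =>
    cases h with
    | equal t₁ t₂ =>
      refine ⟨[ [(NAtom.eq (norm t₁) (norm t₂), true)] ], fun v xs => ?_⟩
      rw [BoundedFormula.realize_bdEqual, dHolds_single]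
      show _ ↔ mEval (Sum.elim v xs) (norm t₁) = mEval (Sum.elim v xs) (norm t₂)
      rw [norm_realize, norm_realize]
    | rel R ts =>
      cases R with
      | pos =>
        refine ⟨[ [(NAtom.pos (norm (ts 0)), true)] ], fun v xs => ?_⟩
        rw [dHolds_single]
        show (0 < Term.realize (Sum.elim v xs) (ts 0)) ↔
          (0 < mEval (Sum.elim v xs) (norm (ts 0)))
        rw [norm_realize]
  | imp h1 h2 ih1 ih2 =>
    obtain ⟨D₁, hD₁⟩ := ih1
    obtain ⟨D₂, hD₂⟩ := ih2
    refine ⟨dOr (dNot D₁) D₂, fun v xs => ?_⟩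
    rw [BoundedFormula.realize_imp, dHolds_or, dHolds_not, hD₁, hD₂, imp_iff_not_or]

/-! ### Eliminating one quantifier from a quantifier-free bounded formula -/

def fmap : (β ⊕ Fin (m + 1)) → ((β ⊕ Fin m) ⊕ Unit) :=
  Sum.elim (fun b => Sum.inl (Sum.inl b))
    (fun i => if h : (i : ℕ) < m then Sum.inl (Sum.inr ⟨i, h⟩) else Sum.inr ())

lemma env_fmap (v : β → ℝ) (xs : Fin m → ℝ) (x : ℝ) :
    (ext (Sum.elim v xs) x) ∘ (fmap : (β ⊕ Fin (m + 1)) → _)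
      = Sum.elim v (Fin.snoc xs x) := by
  funext b
  rcases b with b | i
  · rfl
  · by_cases h : (i : ℕ) < m
    · have h1 : (ext (Sum.elim v xs) x ∘ fmap) (Sum.inr i) = xs ⟨i, h⟩ := by
        simp [fmap, ext, h]
      rw [h1, Sum.elim_inr]
      simp only [Fin.snoc, h, dif_pos, cast_eq]
      rfl
    · have h1 : (ext (Sum.elim v xs) x ∘ fmap) (Sum.inr i) = x := by
        simp [fmap, ext, h]
      rw [h1, Sum.elim_inr]
      simp [Fin.snoc, h]

lemma exBounded {θ : LmulPos.BoundedFormula β (m + 1)} (h : θ.IsQF) :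
    ∃ ρ : LmulPos.BoundedFormula β m, ρ.IsQF ∧ ∀ (v : β → ℝ) (xs : Fin m → ℝ),
      ((∃ x : ℝ, θ.Realize v (Fin.snoc xs x)) ↔ ρ.Realize v xs) := by
  obtain ⟨D, hD⟩ := qf_toDNF h
  refine ⟨dForm (elimDNF (dMapA (aMap fmap) D)), dForm_isQF _, fun v xs => ?_⟩
  rw [realize_dForm, elimDNF_correct]
  constructor
  · rintro ⟨x, hx⟩
    refine ⟨x, ?_⟩
    rw [dHolds_mapA (fun a => aHolds_map fmap _ a) D, env_fmap]
    exact (hD v (Fin.snoc xs x)).mp hx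
  · rintro ⟨x, hx⟩
    refine ⟨x, ?_⟩
    rw [dHolds_mapA (fun a => aHolds_map fmap _ a) D, env_fmap] at hx
    exact (hD v (Fin.snoc xs x)).mpr hx

/-! ### Main induction -/

theorem bqe (φ : LmulPos.BoundedFormula β m) :
    ∃ ψ : LmulPos.BoundedFormula β m, ψ.IsQF ∧ ∀ (v : β → ℝ) (xs : Fin m → ℝ),
      (φ.Realize v xs ↔ ψ.Realize v xs) := by
  induction φ with
  | falsum => exact ⟨_, BoundedFormula.isQF_bot, fun v xs => Iff.rfl⟩
  | equal t₁ t₂ =>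
    exact ⟨_, (BoundedFormula.IsAtomic.equal t₁ t₂).isQF, fun v xs => Iff.rfl⟩
  | rel R ts =>
    exact ⟨_, (BoundedFormula.IsAtomic.rel R ts).isQF, fun v xs => Iff.rfl⟩
  | imp φ₁ φ₂ ih₁ ih₂ =>
    obtain ⟨ψ₁, h₁, hr₁⟩ := ih₁
    obtain ⟨ψ₂, h₂, hr₂⟩ := ih₂
    refine ⟨ψ₁.imp ψ₂, h₁.imp h₂, fun v xs => ?_⟩
    rw [BoundedFormula.realize_imp, BoundedFormula.realize_imp, hr₁ v xs, hr₂ v xs]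
  | all θ ih =>
    obtain ⟨ψθ, hψ, hrψ⟩ := ih
    obtain ⟨ρ, hρqf, hρ⟩ := exBounded hψ.not
    refine ⟨ρ.not, hρqf.not, fun v xs => ?_⟩
    rw [BoundedFormula.realize_all, BoundedFormula.realize_not, ← hρ v xs]
    push_neg
    constructor
    · intro h x
      have := h x
      rw [hrψ v (Fin.snoc xs x)] at this
      rw [BoundedFormula.realize_not]
      exact fun hn => hn this
    · intro h x
      have := h x
      rw [BoundedFormula.realize_not, not_not] at this
      rw [hrψ v (Fin.snoc xs x)]
      exact this

end RQE

/-- **Quantifier elimination for the multiplicative reals with positivity**: every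
formula is equivalent, in `ℝ`, to a quantifier-free formula in the same free
variables. -/
theorem Real_mul_pos_QE :
    ∀ (k : ℕ) (φ : LmulPos.Formula (Fin k)),
      ∃ ψ : LmulPos.Formula (Fin k), ψ.IsQF ∧
        ∀ xs : Fin k → ℝ, φ.Realize xs ↔ ψ.Realize xs := by
  intro k φ
  obtain ⟨ψ, hqf, h⟩ := RQE.bqe φ
  refine ⟨ψ, hqf, fun xs => ?_⟩
  show Formula.Realize φ xs ↔ Formula.Realize ψ xs
  unfold Formula.Realize
  exact h xs _
end
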